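/- arXiv:1512.03522 — 7 statements merged into one kernel-verified Lean document; each statement's English description precedes it below -/
import Mathlib

section
/- For every i = 1, …, m+1 one has (Ĉ_i/β̂_i) · ∑_{j=1}^{n+1} D̂_j/(β̂_i + γ̂_j) = [ ∏_{k=1}^{m}(η_k − β̂_i) · ∏_{k=1, k≠i}^{m+1} β̂_k · ∏_{k=1}^{n}(β̂_i + ϑ_k) · ∏_{k=1}^{n+1} γ̂_k ] / [ ∏_{k=1}^{m} η_k · ∏_{k=1, k≠i}^{m+1}(β̂_k − β̂_i) · ∏_{k=1}^{n} ϑ_k · ∏_{k=1}^{n+1}(β̂_i + γ̂_k) ]. -/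
open Finset Polynomial

lemma lagrange_eval_real {n : ℕ} (a : Fin (n+1) → ℝ) (ha : Function.Injective a)
    (f : Polynomial ℝ) (hf : f.degree < (n+1 : ℕ)) (x : ℝ) :
    f.eval x = ∑ j, f.eval (a j) * ∏ k ∈ Finset.univ.erase j, ((a j - a k)⁻¹ * (x - a k)) := by
  have hinj : Set.InjOn a (Finset.univ : Finset (Fin (n+1))) := ha.injOn
  have h := Lagrange.eq_interpolate (f := f) hinj (by simpa using hf)
  conv_lhs => rw [h]
  rw [Lagrange.interpolate_apply, Polynomial.eval_finset_sum]
  refine Finset.sum_congr rfl fun j _ => ?_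
  rw [Polynomial.eval_mul, Polynomial.eval_C, Lagrange.basis, Polynomial.eval_prod]
  refine congrArg _ (Finset.prod_congr rfl fun k hk => ?_)
  simp [Lagrange.basisDivisor]

lemma partial_frac {n : ℕ} (γ : Fin (n+1) → ℝ) (ϑ : Fin n → ℝ)
    (hγ : Function.Injective γ) (β : ℝ) :
    ∏ k, (β + ϑ k) =
      ∑ j, (∏ k, (ϑ k - γ j)) * ∏ k ∈ Finset.univ.erase j, ((γ k - γ j)⁻¹ * (β + γ k)) := by
  have hinj : Function.Injective (fun j => -γ j) := fun x y h => hγ (by simpa using neg_injective h)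
  set f : Polynomial ℝ := ∏ k, (X + C (ϑ k)) with hfdef
  have hdeg : f.degree < (n+1 : ℕ) := by
    have : f.degree = n := by
      rw [hfdef, degree_prod]
      simp [degree_X_add_C]
    rw [this]
    exact_mod_cast Nat.lt_succ_self n
  have heval : ∀ x : ℝ, f.eval x = ∏ k, (x + ϑ k) := by
    intro x; rw [hfdef, eval_prod]; simp
  have h := lagrange_eval_real (fun j => -γ j) hinj f hdeg β
  rw [heval] at h
  rw [h]
  refine Finset.sum_congr rfl fun j _ => ?_
  rw [heval]
  congr 1
  · exact Finset.prod_congr rfl fun k _ => by ring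
  · exact Finset.prod_congr rfl fun k _ => by ring_nf

/-- Derivation of the closed form (3.5) of `H_i` from (B.28): with both interlacing
conditions and `Ĉ_i`, `D̂_j` as in Lemma B.2, for every `i = 1, …, m+1`,
`(Ĉ_i/β̂_i) ∑_j D̂_j/(β̂_i + γ̂_j)` equals the stated product/quotient expression. -/
theorem stmt_6 (m n : ℕ) (hm : 1 ≤ m) (hn : 1 ≤ n)
    (η : Fin m → ℝ) (ϑ : Fin n → ℝ)
    (βh : Fin (m + 1) → ℝ) (γh : Fin (n + 1) → ℝ)
    (hβ0 : 0 < βh 0)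
    (hβint : ∀ k : Fin m, βh k.castSucc < η k ∧ η k < βh k.succ)
    (hγ0 : 0 < γh 0)
    (hγint : ∀ k : Fin n, γh k.castSucc < ϑ k ∧ ϑ k < γh k.succ)
    (C : Fin (m + 1) → ℝ)
    (hC : ∀ i, C i = βh i * (∏ k, ((η k - βh i) / η k)) *
      (∏ k ∈ Finset.univ.erase i, (βh k / (βh k - βh i))))
    (D : Fin (n + 1) → ℝ)
    (hD : ∀ j, D j = γh j * (∏ k, ((ϑ k - γh j) / ϑ k)) *
      (∏ k ∈ Finset.univ.erase j, (γh k / (γh k - γh j)))) :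
    ∀ i : Fin (m + 1),
      (C i / βh i) * (∑ j, D j / (βh i + γh j)) =
        ((∏ k, (η k - βh i)) * (∏ k ∈ Finset.univ.erase i, βh k) *
            (∏ k, (βh i + ϑ k)) * (∏ k, γh k)) /
          ((∏ k, η k) * (∏ k ∈ Finset.univ.erase i, (βh k - βh i)) *
            (∏ k, ϑ k) * (∏ k, (βh i + γh k))) := by
  have hβmono : StrictMono βh := by
    rw [Fin.strictMono_iff_lt_succ]
    exact fun k => (hβint k).1.trans (hβint k).2
  have hγmono : StrictMono γh := by
    rw [Fin.strictMono_iff_lt_succ]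
    exact fun k => (hγint k).1.trans (hγint k).2
  have hβpos : ∀ i, 0 < βh i := fun i => lt_of_lt_of_le hβ0 (hβmono.monotone (Fin.zero_le i))
  have hγpos : ∀ i, 0 < γh i := fun i => lt_of_lt_of_le hγ0 (hγmono.monotone (Fin.zero_le i))
  have hηpos : ∀ k, 0 < η k := fun k => (hβpos _).trans (hβint k).1
  have hϑpos : ∀ k, 0 < ϑ k := fun k => (hγpos _).trans (hγint k).1
  intro i
  have hβi := (hβpos i).ne'
  have hΘ : (∏ k, ϑ k) ≠ 0 := Finset.prod_ne_zero_iff.2 fun k _ => (hϑpos k).ne'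
  have hH : (∏ k, η k) ≠ 0 := Finset.prod_ne_zero_iff.2 fun k _ => (hηpos k).ne'
  have hBγ : ∀ k, βh i + γh k ≠ 0 := fun k => (add_pos (hβpos i) (hγpos k)).ne'
  have hBγp : (∏ k, (βh i + γh k)) ≠ 0 := Finset.prod_ne_zero_iff.2 fun k _ => hBγ k
  -- the partial fraction sum
  have key := partial_frac γh ϑ hγmono.injective (βh i)
  have hterm : ∀ j : Fin (n+1), D j / (βh i + γh j) =
      ((∏ k, γh k) / ((∏ k, ϑ k) * (∏ k, (βh i + γh k)))) *
        ((∏ k, (ϑ k - γh j)) * ∏ k ∈ Finset.univ.erase j, ((γh k - γh j)⁻¹ * (βh i + γh k))) := by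
    intro j
    have hE : (∏ k ∈ Finset.univ.erase j, (γh k - γh j)) ≠ 0 :=
      Finset.prod_ne_zero_iff.2 fun k hk =>
        sub_ne_zero.2 (hγmono.injective.ne (Finset.mem_erase.1 hk).1)
    have hB : (∏ k ∈ Finset.univ.erase j, (βh i + γh k)) ≠ 0 :=
      Finset.prod_ne_zero_iff.2 fun k _ => hBγ k
    rw [hD j, Finset.prod_div_distrib, Finset.prod_div_distrib,
      Finset.prod_mul_distrib, Finset.prod_inv_distrib,
      ← Finset.mul_prod_erase _ γh (Finset.mem_univ j),
      ← Finset.mul_prod_erase _ (fun k => βh i + γh k) (Finset.mem_univ j)]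
    have hp := hBγ j
    generalize (∏ k, ϑ k) = Θ at hΘ ⊢
    generalize (∏ k, (ϑ k - γh j)) = A
    generalize (∏ k ∈ Finset.univ.erase j, γh k) = G
    generalize hE' : (∏ k ∈ Finset.univ.erase j, (γh k - γh j)) = E at hE
    generalize hB' : (∏ k ∈ Finset.univ.erase j, (βh i + γh k)) = B at hB
    field_simp
  rw [Finset.sum_congr rfl fun j _ => hterm j, ← Finset.mul_sum, ← key, hC i]
  have hBB : (∏ k ∈ Finset.univ.erase i, (βh k - βh i)) ≠ 0 :=
    Finset.prod_ne_zero_iff.2 fun k hk =>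
      sub_ne_zero.2 (hβmono.injective.ne (Finset.mem_erase.1 hk).1)
  rw [Finset.prod_div_distrib, Finset.prod_div_distrib]
  generalize (∏ k, η k) = H at hH ⊢
  generalize (∏ k, (η k - βh i)) = A
  generalize (∏ k ∈ Finset.univ.erase i, βh k) = P
  generalize hQ' : (∏ k ∈ Finset.univ.erase i, (βh k - βh i)) = Q at hBB
  generalize (∏ k, γh k) = G
  generalize (∏ k, (βh i + ϑ k)) = T
  generalize (∏ k, ϑ k) = Θ at hΘ ⊢
  generalize hR' : (∏ k, (βh i + γh k)) = R at hBγp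
  field_simp
end

section
/- For every j = 1, …, n+1 one has D̂_j · ∑_{i=1}^{m+1} Ĉ_i/(β̂_i(β̂_i + γ̂_j)) − D̂_j/γ̂_j = −[ ∏_{k=1}^{n}(ϑ_k − γ̂_j) · ∏_{k=1, k≠j}^{n+1} γ̂_k · ∏_{k=1}^{m}(γ̂_j + η_k) · ∏_{k=1}^{m+1} β̂_k ] / [ ∏_{k=1}^{n} ϑ_k · ∏_{k=1, k≠j}^{n+1}(γ̂_k − γ̂_j) · ∏_{k=1}^{m} η_k · ∏_{k=1}^{m+1}(γ̂_j + β̂_k) ]. -/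
open Finset Polynomial

section aux
variable {m : ℕ}

lemma lagrange_key {m : ℕ} (v : Fin (m+1) → ℝ) (hv : Function.Injective v)
    (η : Fin m → ℝ) (x : ℝ) :
    ∏ k, (η k - x) =
      ∑ i, (∏ k, (η k - v i)) *
        ∏ k ∈ Finset.univ.erase i, ((x - v k) / (v i - v k)) := by
  set P : Polynomial ℝ := ∏ k, (Polynomial.C (η k) - Polynomial.X) with hP
  have hdeg : P.degree < (Finset.univ : Finset (Fin (m+1))).card := by
    have h1 : P.degree = m := by
      rw [hP, Polynomial.degree_prod]
      have : ∀ k : Fin m, (Polynomial.C (η k) - Polynomial.X).degree = 1 := by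
        intro k
        rw [show Polynomial.C (η k) - Polynomial.X = -(Polynomial.X - Polynomial.C (η k)) by ring,
          Polynomial.degree_neg, Polynomial.degree_X_sub_C]
      simp [this, Finset.card_univ]
    rw [h1]
    simp only [Finset.card_univ, Fintype.card_fin]
    exact_mod_cast Nat.lt_succ_self m
  have h := Lagrange.eq_interpolate (s := Finset.univ) (v := v) hv.injOn hdeg
  have h2 := congrArg (Polynomial.eval x) h
  rw [Lagrange.interpolate_apply] at h2
  simp only [Polynomial.eval_finset_sum, Polynomial.eval_mul, Polynomial.eval_C] at h2
  have hL : P.eval x = ∏ k, (η k - x) := by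
    simp [hP, Polynomial.eval_prod]
  have hN : ∀ i, P.eval (v i) = ∏ k, (η k - v i) := by
    intro i; simp [hP, Polynomial.eval_prod]
  rw [hL] at h2
  rw [h2]
  refine Finset.sum_congr rfl fun i _ => ?_
  rw [hN i]
  congr 1
  rw [Lagrange.basis, Polynomial.eval_prod]
  refine Finset.prod_congr rfl fun k _ => ?_
  rw [Lagrange.basisDivisor]
  simp [div_eq_inv_mul]

lemma key0 (v : Fin (m+1) → ℝ) (hv : Function.Injective v) (η : Fin m → ℝ) :
    ∏ k, η k =
      ∑ i, (∏ k, (η k - v i)) *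
        ∏ k ∈ Finset.univ.erase i, (v k / (v k - v i)) := by
  have h := lagrange_key v hv η 0
  simp only [sub_zero] at h
  rw [h]
  refine Finset.sum_congr rfl fun i _ => ?_
  congr 1
  refine Finset.prod_congr rfl fun k _ => ?_
  rw [show (0:ℝ) - v k = -(v k) by ring, show v i - v k = -(v k - v i) by ring,
    neg_div_neg_eq]

lemma keyg (v : Fin (m+1) → ℝ) (hv : Function.Injective v) (η : Fin m → ℝ) (γ : ℝ) :
    ∏ k, (γ + η k) =
      ∑ i, (∏ k, (η k - v i)) *
        ∏ k ∈ Finset.univ.erase i, ((γ + v k) / (v k - v i)) := by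
  have h := lagrange_key v hv η (-γ)
  rw [show (∏ k, (η k - -γ)) = ∏ k, (γ + η k) from
    Finset.prod_congr rfl fun k _ => by ring] at h
  rw [h]
  refine Finset.sum_congr rfl fun i _ => ?_
  congr 1
  refine Finset.prod_congr rfl fun k _ => ?_
  rw [show -γ - v k = -(γ + v k) by ring, show v i - v k = -(v k - v i) by ring,
    neg_div_neg_eq]

lemma term1_alg (b a p e : ℝ) (hb : b ≠ 0) (hp : p ≠ 0) :
    b * (a / p) * e / b = a * e / p := by
  field_simp

lemma term2_alg (b g a p e1 e2 q Pb Pg : ℝ) (hp : p ≠ 0) (hq : q ≠ 0) (he2 : e2 ≠ 0)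
    (hbg : b + g ≠ 0) (eβ : Pb = b * e1) (eγ : Pg = (g + b) * e2) :
    b * (a / p) * (e1 / q) / (b + g) = Pb / (p * Pg) * (a * (e2 / q)) := by
  subst eβ eγ
  have hgb : g + b ≠ 0 := by rwa [add_comm]
  field_simp
  ring

lemma frac_split (a b g : ℝ) (hb : b ≠ 0) (hg : g ≠ 0) (hbg : b + g ≠ 0) :
    a / (b * (b + g)) = a / b * g⁻¹ - a / (b + g) * g⁻¹ := by
  field_simp
  ring

lemma final_alg (g T1 T2 T3 T4 Pb Pgh Pe Pgb : ℝ) (hg : g ≠ 0) (h2 : T2 ≠ 0)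
    (h4 : T4 ≠ 0) (he : Pe ≠ 0) (hgb : Pgb ≠ 0) :
    g * (T1 / T2) * (T3 / T4) * (1 * g⁻¹ - Pb * Pgh / (Pe * Pgb) * g⁻¹) -
      g * (T1 / T2) * (T3 / T4) / g =
      -(T1 * T3 * Pgh * Pb / (T2 * T4 * Pe * Pgb)) := by
  field_simp
  ring

end aux

/-- Derivation of the closed form (3.5) of `N_j` from (B.28) via (B.30): with both
interlacing conditions and `Ĉ_i`, `D̂_j` as in Lemma B.2, for every `j = 1, …, n+1`,
`D̂_j ∑_i Ĉ_i/(β̂_i(β̂_i + γ̂_j)) − D̂_j/γ̂_j` equals the stated expression. -/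
theorem stmt_7 (m n : ℕ) (hm : 1 ≤ m) (hn : 1 ≤ n)
    (η : Fin m → ℝ) (ϑ : Fin n → ℝ)
    (βh : Fin (m + 1) → ℝ) (γh : Fin (n + 1) → ℝ)
    (hβ0 : 0 < βh 0)
    (hβint : ∀ k : Fin m, βh k.castSucc < η k ∧ η k < βh k.succ)
    (hγ0 : 0 < γh 0)
    (hγint : ∀ k : Fin n, γh k.castSucc < ϑ k ∧ ϑ k < γh k.succ)
    (C : Fin (m + 1) → ℝ)
    (hC : ∀ i, C i = βh i * (∏ k, ((η k - βh i) / η k)) *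
      (∏ k ∈ Finset.univ.erase i, (βh k / (βh k - βh i))))
    (D : Fin (n + 1) → ℝ)
    (hD : ∀ j, D j = γh j * (∏ k, ((ϑ k - γh j) / ϑ k)) *
      (∏ k ∈ Finset.univ.erase j, (γh k / (γh k - γh j)))) :
    ∀ j : Fin (n + 1),
      D j * (∑ i, C i / (βh i * (βh i + γh j))) - D j / γh j =
        -(((∏ k, (ϑ k - γh j)) * (∏ k ∈ Finset.univ.erase j, γh k) *
            (∏ k, (γh j + η k)) * (∏ k, βh k)) /
          ((∏ k, ϑ k) * (∏ k ∈ Finset.univ.erase j, (γh k - γh j)) *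
            (∏ k, η k) * (∏ k, (γh j + βh k)))) := by
  intro j
  have hβmono : StrictMono βh :=
    Fin.strictMono_iff_lt_succ.mpr fun k => (hβint k).1.trans (hβint k).2
  have hγmono : StrictMono γh :=
    Fin.strictMono_iff_lt_succ.mpr fun k => (hγint k).1.trans (hγint k).2
  have hβpos : ∀ i, 0 < βh i := fun i => hβ0.trans_le (hβmono.monotone (Fin.zero_le i))
  have hγpos : ∀ i, 0 < γh i := fun i => hγ0.trans_le (hγmono.monotone (Fin.zero_le i))
  have hηpos : ∀ k, 0 < η k := fun k => (hβpos _).trans (hβint k).1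
  have hϑpos : ∀ k, 0 < ϑ k := fun k => (hγpos _).trans (hγint k).1
  set γ : ℝ := γh j with hγdef
  have hγne : γ ≠ 0 := (hγpos j).ne'
  have hβγne : ∀ i, βh i + γ ≠ 0 := fun i => (add_pos (hβpos i) (hγpos j)).ne'
  have hγβpos : ∀ i, 0 < γ + βh i := fun i => add_pos (hγpos j) (hβpos i)
  set A : Fin (m+1) → ℝ := fun i => ∏ k, (η k - βh i) with hA
  have hQne : ∀ i : Fin (m+1), (∏ k ∈ Finset.univ.erase i, (βh k - βh i)) ≠ 0 := by
    intro i
    refine Finset.prod_ne_zero_iff.mpr fun k hk => ?_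
    exact sub_ne_zero_of_ne (hβmono.injective.ne (Finset.mem_erase.mp hk).1)
  set Pη : ℝ := ∏ k, η k with hPη
  have hPηne : Pη ≠ 0 := Finset.prod_ne_zero_iff.mpr fun k _ => (hηpos k).ne'
  set Pβ : ℝ := ∏ k, βh k with hPβ
  set Pγβ : ℝ := ∏ k, (γ + βh k) with hPγβ
  have hPγβne : Pγβ ≠ 0 := Finset.prod_ne_zero_iff.mpr fun k _ => (hγβpos k).ne'
  set Pγη : ℝ := ∏ k, (γ + η k) with hPγη
  have k0 : Pη = ∑ i, A i * ∏ k ∈ Finset.univ.erase i, (βh k / (βh k - βh i)) :=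
    key0 βh hβmono.injective η
  have kg : Pγη = ∑ i, A i * ∏ k ∈ Finset.univ.erase i, ((γ + βh k) / (βh k - βh i)) :=
    keyg βh hβmono.injective η γ
  have hAP : ∀ i, (∏ k, ((η k - βh i) / η k)) = A i / Pη := fun i =>
    Finset.prod_div_distrib _ _
  -- S1 = 1
  have hS1 : ∑ i, C i / βh i = 1 := by
    have ht : ∀ i : Fin (m+1), C i / βh i =
        (A i * ∏ k ∈ Finset.univ.erase i, (βh k / (βh k - βh i))) / Pη := by
      intro i
      rw [hC i, hAP i]
      exact term1_alg _ _ _ _ (hβpos i).ne' hPηne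
    rw [Finset.sum_congr rfl fun i _ => ht i, ← Finset.sum_div, ← k0,
      div_self hPηne]
  -- S2
  have hS2 : ∑ i, C i / (βh i + γ) = Pβ * Pγη / (Pη * Pγβ) := by
    have ht : ∀ i : Fin (m+1), C i / (βh i + γ) =
        (Pβ / (Pη * Pγβ)) *
          (A i * ∏ k ∈ Finset.univ.erase i, ((γ + βh k) / (βh k - βh i))) := by
      intro i
      have e1 : Pβ = βh i * ∏ k ∈ Finset.univ.erase i, βh k :=
        (Finset.mul_prod_erase _ _ (Finset.mem_univ i)).symm
      have e2 : Pγβ = (γ + βh i) * ∏ k ∈ Finset.univ.erase i, (γ + βh k) :=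
        (Finset.mul_prod_erase _ _ (Finset.mem_univ i)).symm
      have hPge : (∏ k ∈ Finset.univ.erase i, (γ + βh k)) ≠ 0 :=
        Finset.prod_ne_zero_iff.mpr fun k _ => (hγβpos k).ne'
      rw [hC i, hAP i, Finset.prod_div_distrib, Finset.prod_div_distrib]
      exact term2_alg _ _ _ _ _ _ _ _ _ hPηne (hQne i) hPge (hβγne i) e1 e2
    rw [Finset.sum_congr rfl fun i _ => ht i, ← Finset.mul_sum, ← kg, div_mul_eq_mul_div]
  -- split the main sum
  have hSig : (∑ i, C i / (βh i * (βh i + γ))) =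
      (∑ i, C i / βh i) * γ⁻¹ - (∑ i, C i / (βh i + γ)) * γ⁻¹ := by
    rw [Finset.sum_mul, Finset.sum_mul, ← Finset.sum_sub_distrib]
    exact Finset.sum_congr rfl fun i _ =>
      frac_split (C i) (βh i) γ (hβpos i).ne' hγne (hβγne i)
  rw [hSig, hS1, hS2, hD j]
  have hPϑne : (∏ k, ϑ k) ≠ 0 := Finset.prod_ne_zero_iff.mpr fun k _ => (hϑpos k).ne'
  have hQγne : (∏ k ∈ Finset.univ.erase j, (γh k - γh j)) ≠ 0 :=
    Finset.prod_ne_zero_iff.mpr fun k hk =>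
      sub_ne_zero_of_ne (hγmono.injective.ne (Finset.mem_erase.mp hk).1)
  rw [show (∏ k, ((ϑ k - γh j) / ϑ k)) = (∏ k, (ϑ k - γh j)) / (∏ k, ϑ k) from
      Finset.prod_div_distrib _ _,
    show (∏ k ∈ Finset.univ.erase j, (γh k / (γh k - γh j))) =
        (∏ k ∈ Finset.univ.erase j, γh k) / (∏ k ∈ Finset.univ.erase j, (γh k - γh j)) from
      Finset.prod_div_distrib _ _]
  exact final_alg γ _ _ _ _ Pβ Pγη Pη Pγβ hγne hPϑne hQγne hPηne hPγβne
end

section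
/- For every k = 1, …, m one has ∑_{i=1}^{m+1} H_i η_k/(β̂_i − η_k) + 1 + ∑_{j=1}^{n+1} N_j η_k/(η_k + γ̂_j) = 0. -/
set_option maxHeartbeats 1600000

open Polynomial Finset

lemma aux_deg {ι : Type*} (s : Finset ι) (f : ι → ℝ[X])
    (h : ∀ i ∈ s, (f i).natDegree ≤ 1) : (∏ i ∈ s, f i).natDegree ≤ s.card := by
  refine (Polynomial.natDegree_prod_le s f).trans ?_
  calc ∑ i ∈ s, (f i).natDegree ≤ ∑ i ∈ s, 1 := Finset.sum_le_sum h
  _ = s.card := by simp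

/-- Identity (B.37): with the coefficients `H_i`, `N_j` of (3.5), for every `k = 1, …, m`,
`∑_i H_i η_k/(β̂_i − η_k) + 1 + ∑_j N_j η_k/(η_k + γ̂_j) = 0`. -/
theorem stmt_8 (m n : ℕ) (hm : 1 ≤ m) (hn : 1 ≤ n)
    (η : Fin m → ℝ) (ϑ : Fin n → ℝ)
    (βh : Fin (m + 1) → ℝ) (γh : Fin (n + 1) → ℝ)
    (hβ0 : 0 < βh 0)
    (hβint : ∀ k : Fin m, βh k.castSucc < η k ∧ η k < βh k.succ)
    (hγ0 : 0 < γh 0)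
    (hγint : ∀ k : Fin n, γh k.castSucc < ϑ k ∧ ϑ k < γh k.succ)
    (H : Fin (m + 1) → ℝ)
    (hH : ∀ i, H i =
      ((∏ k, (η k - βh i)) * (∏ k ∈ Finset.univ.erase i, βh k) *
          (∏ k, (βh i + ϑ k)) * (∏ k, γh k)) /
        ((∏ k, η k) * (∏ k ∈ Finset.univ.erase i, (βh k - βh i)) *
          (∏ k, ϑ k) * (∏ k, (βh i + γh k))))
    (N : Fin (n + 1) → ℝ)
    (hN : ∀ j, N j =
      -(((∏ k, (ϑ k - γh j)) * (∏ k ∈ Finset.univ.erase j, γh k) *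
          (∏ k, (γh j + η k)) * (∏ k, βh k)) /
        ((∏ k, ϑ k) * (∏ k ∈ Finset.univ.erase j, (γh k - γh j)) *
          (∏ k, η k) * (∏ k, (γh j + βh k))))) :
    ∀ k : Fin m,
      (∑ i, H i * η k / (βh i - η k)) + 1 + (∑ j, N j * η k / (η k + γh j)) = 0 := by
  intro k
  -- monotonicity and positivity
  have hβmono : StrictMono βh :=
    Fin.strictMono_iff_lt_succ.mpr fun i => (hβint i).1.trans (hβint i).2
  have hγmono : StrictMono γh :=
    Fin.strictMono_iff_lt_succ.mpr fun j => (hγint j).1.trans (hγint j).2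
  have hβpos : ∀ i, 0 < βh i := fun i => lt_of_lt_of_le hβ0 (hβmono.monotone (Fin.zero_le i))
  have hγpos : ∀ j, 0 < γh j := fun j => lt_of_lt_of_le hγ0 (hγmono.monotone (Fin.zero_le j))
  have hηpos : ∀ l, 0 < η l := fun l => (hβpos _).trans (hβint l).1
  have hϑpos : ∀ l, 0 < ϑ l := fun l => (hγpos _).trans (hγint l).1
  -- nonzero products
  have hηne : (∏ l, η l) ≠ 0 := Finset.prod_ne_zero_iff.mpr fun l _ => (hηpos l).ne'
  have hϑne : (∏ l, ϑ l) ≠ 0 := Finset.prod_ne_zero_iff.mpr fun l _ => (hϑpos l).ne'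
  have hβne : (∏ i, βh i) ≠ 0 := Finset.prod_ne_zero_iff.mpr fun i _ => (hβpos i).ne'
  have hγne : (∏ j, γh j) ≠ 0 := Finset.prod_ne_zero_iff.mpr fun j _ => (hγpos j).ne'
  have hβdiff : ∀ i : Fin (m+1), (∏ i' ∈ Finset.univ.erase i, (βh i' - βh i)) ≠ 0 :=
    fun i => Finset.prod_ne_zero_iff.mpr fun i' hi' =>
      sub_ne_zero.mpr fun h => (Finset.mem_erase.mp hi').1 (hβmono.injective h)
  have hγdiff : ∀ j : Fin (n+1), (∏ j' ∈ Finset.univ.erase j, (γh j' - γh j)) ≠ 0 :=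
    fun j => Finset.prod_ne_zero_iff.mpr fun j' hj' =>
      sub_ne_zero.mpr fun h => (Finset.mem_erase.mp hj').1 (hγmono.injective h)
  have hβγ : ∀ (i : Fin (m+1)), (∏ j, (βh i + γh j)) ≠ 0 :=
    fun i => Finset.prod_ne_zero_iff.mpr fun j _ => (add_pos (hβpos i) (hγpos j)).ne'
  have hγβ : ∀ (j : Fin (n+1)), (∏ i, (γh j + βh i)) ≠ 0 :=
    fun j => Finset.prod_ne_zero_iff.mpr fun i _ => (add_pos (hγpos j) (hβpos i)).ne'
  have hβη : ∀ i, βh i - η k ≠ 0 := by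
    intro i
    rcases le_or_gt i k.castSucc with h | h
    · exact sub_ne_zero.mpr (ne_of_lt ((hβmono.monotone h).trans_lt (hβint k).1))
    · exact sub_ne_zero.mpr
        (ne_of_gt ((hβint k).2.trans_le (hβmono.monotone (Fin.castSucc_lt_iff_succ_le.mp h))))
  have hηγ : ∀ j, (0:ℝ) < η k + γh j := fun j => add_pos (hηpos k) (hγpos j)
  -- the constant
  set c0 : ℝ := (∏ i, βh i) * (∏ j, γh j) / ((∏ l, η l) * (∏ l, ϑ l)) with hc0
  -- the polynomial
  set P : ℝ[X] :=
    (∑ i, C (H i) * X * (∏ i' ∈ Finset.univ.erase i, (C (βh i') - X)) * (∏ j, (X + C (γh j))))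
      + (∏ i, (C (βh i) - X)) * (∏ j, (X + C (γh j)))
      + (∑ j, C (N j) * X * (∏ i, (C (βh i) - X)) *
          (∏ j' ∈ Finset.univ.erase j, (X + C (γh j'))))
      - C c0 * (∏ l, (C (η l) - X)) * (∏ l, (X + C (ϑ l))) with hP
  -- degree bound
  have hsub1 : ∀ a : ℝ, (C a - X : ℝ[X]).natDegree ≤ 1 :=
    fun a => (natDegree_sub_le _ _).trans (by simp)
  have hadd1 : ∀ a : ℝ, (X + C a : ℝ[X]).natDegree ≤ 1 :=
    fun a => (natDegree_add_le _ _).trans (by simp)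
  have hdegP : P.natDegree ≤ m + n + 2 := by
    rw [hP]
    have hβdeg := aux_deg (Finset.univ : Finset (Fin (m+1))) _ (fun i _ => hsub1 (βh i))
    have hγdeg := aux_deg (Finset.univ : Finset (Fin (n+1))) _ (fun j _ => hadd1 (γh j))
    have hηdeg := aux_deg (Finset.univ : Finset (Fin m)) _ (fun l _ => hsub1 (η l))
    have hϑdeg := aux_deg (Finset.univ : Finset (Fin n)) _ (fun l _ => hadd1 (ϑ l))
    simp only [Finset.card_univ, Fintype.card_fin] at hβdeg hγdeg hηdeg hϑdeg
    refine (natDegree_sub_le _ _).trans (max_le ?_ ?_)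
    · refine (natDegree_add_le _ _).trans (max_le ((natDegree_add_le _ _).trans
        (max_le ?_ ?_)) ?_)
      · refine natDegree_sum_le_of_forall_le _ _ fun i _ => ?_
        have hc : (Finset.univ.erase i).card = m := by
          rw [Finset.card_erase_of_mem (Finset.mem_univ i)]; simp
        have h1 := (aux_deg (Finset.univ.erase i) _ (fun i' _ => hsub1 (βh i'))).trans hc.le
        refine le_trans (natDegree_mul_le.trans (add_le_add (natDegree_mul_le.trans (add_le_add
          (natDegree_mul_le.trans (add_le_add (natDegree_C _).le natDegree_X_le)) h1))
          hγdeg)) (by omega)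
      · exact le_trans (natDegree_mul_le.trans (add_le_add hβdeg hγdeg)) (by omega)
      · refine natDegree_sum_le_of_forall_le _ _ fun j _ => ?_
        have hc : (Finset.univ.erase j).card = n := by
          rw [Finset.card_erase_of_mem (Finset.mem_univ j)]; simp
        have h2 := (aux_deg (Finset.univ.erase j) _ (fun j' _ => hadd1 (γh j'))).trans hc.le
        refine le_trans (natDegree_mul_le.trans (add_le_add (natDegree_mul_le.trans (add_le_add
          (natDegree_mul_le.trans (add_le_add (natDegree_C _).le natDegree_X_le)) hβdeg))
          h2)) (by omega)
    · exact le_trans (natDegree_mul_le.trans (add_le_add (natDegree_mul_le.trans (add_le_add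
        (natDegree_C _).le hηdeg)) hϑdeg)) (by omega)
  -- evaluations
  have heval0 : P.eval 0 = 0 := by
    rw [hP]
    simp only [eval_sub, eval_add, eval_mul, eval_finset_sum, eval_prod, eval_C, eval_X,
      mul_zero, zero_mul, Finset.sum_const_zero, add_zero, zero_add, sub_zero]
    rw [hc0]
    field_simp
    ring
  have hevalβ : ∀ i0, P.eval (βh i0) = 0 := by
    intro i0
    rw [hP]
    simp only [eval_sub, eval_add, eval_mul, eval_finset_sum, eval_prod, eval_C, eval_X]
    have hz : (∏ i, (βh i - βh i0)) = 0 :=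
      Finset.prod_eq_zero (Finset.mem_univ i0) (sub_self _)
    simp only [hz, mul_zero, zero_mul, Finset.sum_const_zero, add_zero, zero_add]
    rw [Finset.sum_eq_single i0 ?_ (by simp)]
    · rw [sub_eq_zero, hH i0, hc0,
        show (∏ i, βh i) = βh i0 * ∏ i ∈ Finset.univ.erase i0, βh i from
          (Finset.mul_prod_erase _ _ (Finset.mem_univ i0)).symm]
      simp only [div_mul_eq_mul_div]
      rw [div_eq_div_iff
        (mul_ne_zero (mul_ne_zero (mul_ne_zero hηne (hβdiff i0)) hϑne) (hβγ i0))
        (mul_ne_zero hηne hϑne)]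
      ring
    · intro b _ hb
      have hzz : (∏ x ∈ Finset.univ.erase b, (βh x - βh i0)) = 0 :=
        Finset.prod_eq_zero (Finset.mem_erase.mpr ⟨Ne.symm hb, Finset.mem_univ i0⟩) (sub_self _)
      rw [hzz]
      ring
  have hevalγ : ∀ j0, P.eval (-γh j0) = 0 := by
    intro j0
    rw [hP]
    simp only [eval_sub, eval_add, eval_mul, eval_finset_sum, eval_prod, eval_C, eval_X,
      sub_neg_eq_add, neg_add_eq_sub]
    have hz : (∏ j, (γh j - γh j0)) = 0 :=
      Finset.prod_eq_zero (Finset.mem_univ j0) (sub_self _)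
    simp only [hz, mul_zero, zero_mul, Finset.sum_const_zero, add_zero, zero_add]
    rw [Finset.sum_eq_single j0 ?_ (by simp)]
    · have e1 : (∏ i, (βh i + γh j0)) = ∏ i, (γh j0 + βh i) :=
        Finset.prod_congr rfl fun _ _ => add_comm _ _
      have e2 : (∏ l, (η l + γh j0)) = ∏ l, (γh j0 + η l) :=
        Finset.prod_congr rfl fun _ _ => add_comm _ _
      rw [sub_eq_zero, hN j0, hc0, e1, e2,
        show (∏ j, γh j) = γh j0 * ∏ j ∈ Finset.univ.erase j0, γh j from
          (Finset.mul_prod_erase _ _ (Finset.mem_univ j0)).symm]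
      simp only [← neg_div, div_mul_eq_mul_div]
      rw [div_eq_div_iff
        (mul_ne_zero (mul_ne_zero (mul_ne_zero hϑne (hγdiff j0)) hηne) (hγβ j0))
        (mul_ne_zero hηne hϑne)]
      ring
    · intro b _ hb
      have hzz : (∏ x ∈ Finset.univ.erase b, (γh x - γh j0)) = 0 :=
        Finset.prod_eq_zero (Finset.mem_erase.mpr ⟨Ne.symm hb, Finset.mem_univ j0⟩) (sub_self _)
      rw [hzz]
      ring
  -- the root set
  have hPzero : P = 0 := by
    classical
    refine Polynomial.eq_zero_of_natDegree_lt_card_of_eval_eq_zero' P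
      (insert (0:ℝ) ((Finset.univ.image βh) ∪ (Finset.univ.image (fun j => -γh j)))) ?_ ?_
    · intro x hx
      simp only [Finset.mem_insert, Finset.mem_union, Finset.mem_image, Finset.mem_univ,
        true_and] at hx
      rcases hx with rfl | ⟨i, rfl⟩ | ⟨j, rfl⟩
      · exact heval0
      · exact hevalβ i
      · exact hevalγ j
    · have hcard : (insert (0:ℝ)
          ((Finset.univ.image βh) ∪ (Finset.univ.image (fun j => -γh j)))).card
          = m + n + 3 := by
        rw [Finset.card_insert_of_notMem, Finset.card_union_of_disjoint]
        · rw [Finset.card_image_of_injective _ hβmono.injective,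
            Finset.card_image_of_injective _
              (show Function.Injective (fun j => -γh j) from
                fun a b hab => hγmono.injective (neg_injective hab))]
          simp; omega
        · rw [Finset.disjoint_left]
          intro x hx1 hx2
          simp only [Finset.mem_image, Finset.mem_univ, true_and] at hx1 hx2
          obtain ⟨i, hi⟩ := hx1
          obtain ⟨j, hj⟩ := hx2
          have := hβpos i; have := hγpos j; rw [← hi] at hj; linarith
        · simp only [Finset.mem_union, Finset.mem_image, Finset.mem_univ, true_and]
          rintro (⟨i, hi⟩ | ⟨j, hj⟩)
          · exact (hβpos i).ne' hi
          · have := hγpos j; linarith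
      rw [hcard]; omega
  -- evaluate at η k
  have hPk : P.eval (η k) = 0 := by rw [hPzero]; simp
  rw [hP] at hPk
  have hzk : (∏ l, (η l - η k)) = 0 := Finset.prod_eq_zero (Finset.mem_univ k) (sub_self _)
  simp only [eval_sub, eval_add, eval_mul, eval_finset_sum, eval_prod, eval_C, eval_X, hzk,
    mul_zero, zero_mul, sub_zero] at hPk
  have hD : (∏ i, (βh i - η k)) * (∏ j, (η k + γh j)) ≠ 0 :=
    mul_ne_zero (Finset.prod_ne_zero_iff.mpr fun i _ => hβη i)
      (Finset.prod_ne_zero_iff.mpr fun j _ => (hηγ j).ne')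
  have h1 : ∀ i : Fin (m+1), H i * η k / (βh i - η k)
      = (H i * η k * (∏ i' ∈ Finset.univ.erase i, (βh i' - η k)) * (∏ j, (η k + γh j)))
        / ((∏ i, (βh i - η k)) * (∏ j, (η k + γh j))) := by
    intro i
    rw [div_eq_div_iff (hβη i) hD,
      show (∏ i', (βh i' - η k)) = (βh i - η k) * ∏ i' ∈ Finset.univ.erase i, (βh i' - η k)
        from (Finset.mul_prod_erase _ _ (Finset.mem_univ i)).symm]
    ring
  have h2 : ∀ j : Fin (n+1), N j * η k / (η k + γh j)
      = (N j * η k * (∏ i, (βh i - η k)) * (∏ j' ∈ Finset.univ.erase j, (η k + γh j')))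
        / ((∏ i, (βh i - η k)) * (∏ j, (η k + γh j))) := by
    intro j
    rw [div_eq_div_iff (hηγ j).ne' hD,
      show (∏ j', (η k + γh j')) = (η k + γh j) * ∏ j' ∈ Finset.univ.erase j, (η k + γh j')
        from (Finset.mul_prod_erase _ _ (Finset.mem_univ j)).symm]
    ring
  rw [show (1:ℝ) = ((∏ i, (βh i - η k)) * (∏ j, (η k + γh j)))
      / ((∏ i, (βh i - η k)) * (∏ j, (η k + γh j))) from (div_self hD).symm]
  simp_rw [h1, h2]
  rw [← Finset.sum_div, ← Finset.sum_div, ← add_div, ← add_div, hPk, zero_div]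
end

section
/- One has ∑_{i=1}^{m+1} H_i = 1 + ∑_{j=1}^{n+1} N_j, and ∑_{i=1}^{m+1} H_i β̂_i + ∑_{j=1}^{n+1} N_j γ̂_j = 0. -/
open Polynomial Finset

lemma coeff_basis_top (S : Finset ℝ) (x : ℝ) (hx : x ∈ S) :
    (Lagrange.basis S id x).coeff (#S - 1) = (∏ y ∈ S.erase x, (x - y))⁻¹ := by
  have hinj : Set.InjOn id (S : Set ℝ) := fun a _ b _ h => h
  have hnd := Lagrange.natDegree_basis hinj hx
  rw [← hnd, Polynomial.coeff_natDegree]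
  unfold Lagrange.basis
  rw [Polynomial.leadingCoeff_prod, ← Finset.prod_inv_distrib]
  refine Finset.prod_congr rfl fun y hy => ?_
  have hxy : x ≠ y := (Finset.ne_of_mem_erase hy).symm
  rw [Lagrange.basisDivisor, Polynomial.leadingCoeff_mul, Polynomial.leadingCoeff_C,
    (Polynomial.monic_X_sub_C (id y : ℝ)).leadingCoeff, mul_one, id]
  rfl

lemma lagrange_sum_zero (S : Finset ℝ) (P : ℝ[X]) (h : P.degree < ((#S - 1 : ℕ) : WithBot ℕ)) :
    ∑ x ∈ S, P.eval x / ∏ y ∈ S.erase x, (x - y) = 0 := by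
  rcases S.eq_empty_or_nonempty with rfl | hS
  · simp
  have hinj : Set.InjOn id (S : Set ℝ) := fun a _ b _ h => h
  have hdeg : P.degree < #S :=
    lt_of_lt_of_le h (by exact_mod_cast Nat.sub_le _ _)
  have hP := Lagrange.eq_interpolate (v := id) hinj hdeg
  have hc := congrArg (fun q : ℝ[X] => q.coeff (#S - 1)) hP
  simp only [Lagrange.interpolate_apply, Polynomial.finset_sum_coeff, Polynomial.coeff_C_mul] at hc
  rw [Polynomial.coeff_eq_zero_of_degree_lt h] at hc
  rw [eq_comm] at hc
  calc ∑ x ∈ S, P.eval x / ∏ y ∈ S.erase x, (x - y)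
      = ∑ x ∈ S, P.eval (id x) * (Lagrange.basis S id x).coeff (#S - 1) := by
        refine Finset.sum_congr rfl fun x hx => ?_
        rw [coeff_basis_top S x hx, div_eq_mul_inv, id]
    _ = 0 := hc

set_option maxHeartbeats 1000000 in
/-- First two identities of (C.3): with the coefficients `H_i`, `N_j` of (3.5),
`∑_i H_i = 1 + ∑_j N_j` and `∑_i H_i β̂_i + ∑_j N_j γ̂_j = 0`. -/

theorem stmt_9 (m n : ℕ) (hm : 1 ≤ m) (hn : 1 ≤ n)
    (η : Fin m → ℝ) (ϑ : Fin n → ℝ)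
    (βh : Fin (m + 1) → ℝ) (γh : Fin (n + 1) → ℝ)
    (hβ0 : 0 < βh 0)
    (hβint : ∀ k : Fin m, βh k.castSucc < η k ∧ η k < βh k.succ)
    (hγ0 : 0 < γh 0)
    (hγint : ∀ k : Fin n, γh k.castSucc < ϑ k ∧ ϑ k < γh k.succ)
    (H : Fin (m + 1) → ℝ)
    (hH : ∀ i, H i =
      ((∏ k, (η k - βh i)) * (∏ k ∈ Finset.univ.erase i, βh k) *
          (∏ k, (βh i + ϑ k)) * (∏ k, γh k)) /
        ((∏ k, η k) * (∏ k ∈ Finset.univ.erase i, (βh k - βh i)) *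
          (∏ k, ϑ k) * (∏ k, (βh i + γh k))))
    (N : Fin (n + 1) → ℝ)
    (hN : ∀ j, N j =
      -(((∏ k, (ϑ k - γh j)) * (∏ k ∈ Finset.univ.erase j, γh k) *
          (∏ k, (γh j + η k)) * (∏ k, βh k)) /
        ((∏ k, ϑ k) * (∏ k ∈ Finset.univ.erase j, (γh k - γh j)) *
          (∏ k, η k) * (∏ k, (γh j + βh k))))) :
    ((∑ i, H i) = 1 + ∑ j, N j) ∧ ((∑ i, H i * βh i) + (∑ j, N j * γh j) = 0) := by
  classical
  -- monotonicity / positivity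
  have hβmono : StrictMono βh :=
    Fin.strictMono_iff_lt_succ.mpr fun k => (hβint k).1.trans (hβint k).2
  have hγmono : StrictMono γh :=
    Fin.strictMono_iff_lt_succ.mpr fun k => (hγint k).1.trans (hγint k).2
  have hβpos : ∀ i, 0 < βh i := fun i => lt_of_lt_of_le hβ0 (hβmono.monotone (Fin.zero_le i))
  have hγpos : ∀ j, 0 < γh j := fun j => lt_of_lt_of_le hγ0 (hγmono.monotone (Fin.zero_le j))
  have hηpos : ∀ k, 0 < η k := fun k => (hβpos _).trans (hβint k).1
  have hϑpos : ∀ k, 0 < ϑ k := fun k => (hγpos _).trans (hγint k).1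
  have hγneg_inj : Function.Injective (fun j : Fin (n+1) => -γh j) := by
    intro a b h
    exact hγmono.injective (neg_injective h)
  -- the node set
  set B : Finset ℝ := Finset.image βh Finset.univ with hBdef
  set G : Finset ℝ := Finset.image (fun j => -γh j) Finset.univ with hGdef
  have hBmem : ∀ x ∈ B, 0 < x := by
    intro x hx; rw [hBdef, Finset.mem_image] at hx; obtain ⟨i, _, rfl⟩ := hx; exact hβpos i
  have hGmem : ∀ x ∈ G, x < 0 := by
    intro x hx; rw [hGdef, Finset.mem_image] at hx; obtain ⟨j, _, rfl⟩ := hx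
    simpa using hγpos j
  have h0BG : (0:ℝ) ∉ B ∪ G := by
    intro h
    rcases Finset.mem_union.mp h with h | h
    · exact lt_irrefl 0 (hBmem 0 h)
    · exact lt_irrefl 0 (hGmem 0 h)
  have hBG : Disjoint B G := by
    rw [Finset.disjoint_left]
    intro x hx hx'
    exact absurd ((hGmem x hx')) (not_lt.mpr (le_of_lt (hBmem x hx)))
  set S : Finset ℝ := insert 0 (B ∪ G) with hSdef
  have hcardB : #B = m + 1 := by
    rw [hBdef, Finset.card_image_of_injective _ hβmono.injective, Finset.card_univ, Fintype.card_fin]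
  have hcardG : #G = n + 1 := by
    rw [hGdef, Finset.card_image_of_injective _ hγneg_inj, Finset.card_univ, Fintype.card_fin]
  have hcardS : #S = m + n + 3 := by
    rw [hSdef, Finset.card_insert_of_notMem h0BG, Finset.card_union_of_disjoint hBG,
      hcardB, hcardG]
    ring
  -- the polynomial
  set P : ℝ[X] := (∏ k, (C (η k) - X)) * (∏ k, (X + C (ϑ k))) with hPdef
  have hndP : P.natDegree ≤ m + n := by
    refine le_trans (Polynomial.natDegree_mul_le) (add_le_add ?_ ?_)
    · refine le_trans (Polynomial.natDegree_prod_le _ _) ?_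
      calc ∑ k : Fin m, (C (η k) - X : ℝ[X]).natDegree ≤ ∑ _k : Fin m, 1 := by
            refine Finset.sum_le_sum fun k _ => ?_
            rw [show (C (η k) - X : ℝ[X]) = -(X - C (η k)) by ring, Polynomial.natDegree_neg,
              Polynomial.natDegree_X_sub_C]
        _ = m := by simp
    · refine le_trans (Polynomial.natDegree_prod_le _ _) ?_
      calc ∑ k : Fin n, (X + C (ϑ k) : ℝ[X]).natDegree ≤ ∑ _k : Fin n, 1 := by
            refine Finset.sum_le_sum fun k _ => ?_
            rw [Polynomial.natDegree_X_add_C]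
        _ = n := by simp
  have hdegP : P.degree < ((#S - 1 : ℕ) : WithBot ℕ) := by
    refine lt_of_le_of_lt Polynomial.degree_le_natDegree ?_
    rw [hcardS]
    exact_mod_cast lt_of_le_of_lt hndP (by omega)
  have hdegXP : (X * P).degree < ((#S - 1 : ℕ) : WithBot ℕ) := by
    refine lt_of_le_of_lt Polynomial.degree_le_natDegree ?_
    rw [hcardS]
    have : (X * P).natDegree ≤ 1 + (m + n) :=
      le_trans Polynomial.natDegree_mul_le (add_le_add Polynomial.natDegree_X_le hndP)
    exact_mod_cast lt_of_le_of_lt this (by omega)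
  have E1 := lagrange_sum_zero S P hdegP
  have E2 := lagrange_sum_zero S (X * P) hdegXP
  -- evaluation of P
  have hevalP : ∀ x : ℝ, P.eval x = (∏ k, (η k - x)) * (∏ k, (x + ϑ k)) := by
    intro x
    rw [hPdef]
    simp [Polynomial.eval_prod]
  -- sums over S
  have hsum : ∀ f : ℝ → ℝ, ∑ x ∈ S, f x = f 0 + ((∑ i, f (βh i)) + (∑ j, f (-γh j))) := by
    intro f
    rw [hSdef, Finset.sum_insert h0BG, Finset.sum_union hBG, hBdef, hGdef,
      Finset.sum_image (fun a _ b _ h => hβmono.injective h),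
      Finset.sum_image (fun a _ b _ h => hγneg_inj h)]
  -- product of (x - y) over erased node sets
  have hprod0 : ∏ y ∈ S.erase 0, ((0:ℝ) - y) = (∏ i, -βh i) * (∏ j, γh j) := by
    rw [hSdef, Finset.erase_insert h0BG, Finset.prod_union hBG, hBdef, hGdef,
      Finset.prod_image (fun a _ b _ h => hβmono.injective h),
      Finset.prod_image (fun a _ b _ h => hγneg_inj h)]
    simp
  have hβnG : ∀ i : Fin (m+1), βh i ∉ G := fun i h =>
    absurd (hGmem _ h) (not_lt.mpr (le_of_lt (hβpos i)))
  have hγnB : ∀ j : Fin (n+1), (-γh j) ∉ B := by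
    intro j h
    have h1 := hBmem _ h
    have h2 := hγpos j
    linarith
  have hprodβ : ∀ i, ∏ y ∈ S.erase (βh i), (βh i - y)
      = βh i * ((∏ k ∈ Finset.univ.erase i, (βh i - βh k)) * ∏ j, (βh i + γh j)) := by
    intro i
    have hne : (0:ℝ) ≠ βh i := (ne_of_lt (hβpos i))
    have h1 : S.erase (βh i) = insert 0 ((B ∪ G).erase (βh i)) :=
      Finset.erase_insert_of_ne hne
    have h2 : (B ∪ G).erase (βh i) = (B.erase (βh i)) ∪ G := by
      rw [Finset.erase_union_distrib, Finset.erase_eq_of_notMem (hβnG i)]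
    have h3 : B.erase (βh i) = Finset.image βh (Finset.univ.erase i) := by
      rw [hBdef, ← Finset.image_erase hβmono.injective]
    have h0 : (0:ℝ) ∉ (B.erase (βh i)) ∪ G := by
      intro h
      exact h0BG (Finset.union_subset_union (Finset.erase_subset _ _) le_rfl h)
    have hd : Disjoint (B.erase (βh i)) G :=
      Finset.disjoint_of_subset_left (Finset.erase_subset _ _) hBG
    rw [h1, h2, Finset.prod_insert h0, Finset.prod_union hd, h3, hGdef,
      Finset.prod_image (fun a _ b _ h => hβmono.injective h),
      Finset.prod_image (fun a _ b _ h => hγneg_inj h)]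
    simp [sub_neg_eq_add]
  have hprodγ : ∀ j, ∏ y ∈ S.erase (-γh j), ((-γh j) - y)
      = (-γh j) * ((∏ i, -(γh j + βh i)) * ∏ k ∈ Finset.univ.erase j, (γh k - γh j)) := by
    intro j
    have hne : (0:ℝ) ≠ -γh j := by
      have := hγpos j; intro h; linarith
    have h1 : S.erase (-γh j) = insert 0 ((B ∪ G).erase (-γh j)) :=
      Finset.erase_insert_of_ne hne
    have h2 : (B ∪ G).erase (-γh j) = B ∪ (G.erase (-γh j)) := by
      rw [Finset.erase_union_distrib, Finset.erase_eq_of_notMem (hγnB j)]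
    have h3 : G.erase (-γh j) = Finset.image (fun k => -γh k) (Finset.univ.erase j) := by
      rw [hGdef, ← Finset.image_erase hγneg_inj]
    have h0 : (0:ℝ) ∉ B ∪ (G.erase (-γh j)) := by
      intro h
      exact h0BG (Finset.union_subset_union le_rfl (Finset.erase_subset _ _) h)
    have hd : Disjoint B (G.erase (-γh j)) :=
      Finset.disjoint_of_subset_right (Finset.erase_subset _ _) hBG
    rw [h1, h2, Finset.prod_insert h0, Finset.prod_union hd, h3, hBdef,
      Finset.prod_image (fun a _ b _ h => hβmono.injective h),
      Finset.prod_image (fun a _ b _ h => hγneg_inj h)]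
    rw [sub_zero]
    congr 1
    congr 1
    · exact Finset.prod_congr rfl fun i _ => by ring
    · exact Finset.prod_congr rfl fun k _ => by ring
  -- sign constant
  set sg : ℝ := (-1:ℝ)^(m+1) with hsgdef
  have hsg2 : sg * sg = 1 := by
    rw [hsgdef, ← pow_add]
    exact Even.neg_one_pow ⟨m+1, by ring⟩
  have hsg0 : sg ≠ 0 := by
    rw [hsgdef]
    exact pow_ne_zero _ (by norm_num)
  have hm1 : ((-1:ℝ))^m = -sg := by rw [hsgdef, pow_succ]; ring
  -- positive products
  have hPη : (0:ℝ) < ∏ k, η k := Finset.prod_pos fun k _ => hηpos k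
  have hPϑ : (0:ℝ) < ∏ k, ϑ k := Finset.prod_pos fun k _ => hϑpos k
  have hPβ : (0:ℝ) < ∏ k, βh k := Finset.prod_pos fun k _ => hβpos k
  have hPγ : (0:ℝ) < ∏ k, γh k := Finset.prod_pos fun k _ => hγpos k
  set e : ℝ := ((∏ k, η k) * (∏ k, ϑ k)) / ((∏ k, βh k) * (∏ k, γh k)) with hedef
  have he : (0:ℝ) < e := by positivity
  have hse : sg * e ≠ 0 := mul_ne_zero hsg0 (ne_of_gt he)
  -- sign rewrites
  have hnegβ : (∏ i, -βh i) = sg * ∏ i, βh i := by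
    calc (∏ i, -βh i) = ∏ i, (-1) * βh i := by refine Finset.prod_congr rfl fun i _ => by ring
      _ = (∏ _i : Fin (m+1), (-1:ℝ)) * ∏ i, βh i := Finset.prod_mul_distrib
      _ = sg * ∏ i, βh i := by rw [Finset.prod_const, Finset.card_univ, Fintype.card_fin, hsgdef]
  have hAi : ∀ i, (∏ k ∈ Finset.univ.erase i, (βh i - βh k))
      = (-sg) * ∏ k ∈ Finset.univ.erase i, (βh k - βh i) := by
    intro i
    rw [← hm1]
    calc (∏ k ∈ Finset.univ.erase i, (βh i - βh k))
        = ∏ k ∈ Finset.univ.erase i, (-1) * (βh k - βh i) :=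
          Finset.prod_congr rfl fun k _ => by ring
      _ = (∏ _k ∈ Finset.univ.erase i, (-1:ℝ)) * ∏ k ∈ Finset.univ.erase i, (βh k - βh i) :=
          Finset.prod_mul_distrib
      _ = (-1)^m * ∏ k ∈ Finset.univ.erase i, (βh k - βh i) := by
          rw [Finset.prod_const, Finset.card_erase_of_mem (Finset.mem_univ i),
            Finset.card_univ, Fintype.card_fin, Nat.add_sub_cancel]
  have hGj : ∀ j : Fin (n+1), (∏ i, -(γh j + βh i)) = sg * ∏ i, (γh j + βh i) := by
    intro j
    calc (∏ i, -(γh j + βh i)) = ∏ i, (-1) * (γh j + βh i) :=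
          Finset.prod_congr rfl fun i _ => by ring
      _ = (∏ _i : Fin (m+1), (-1:ℝ)) * ∏ i, (γh j + βh i) := Finset.prod_mul_distrib
      _ = sg * ∏ i, (γh j + βh i) := by
          rw [Finset.prod_const, Finset.card_univ, Fintype.card_fin, hsgdef]
  -- nonvanishing of difference products
  have hA'ne : ∀ i, (∏ k ∈ Finset.univ.erase i, (βh k - βh i)) ≠ 0 := fun i =>
    Finset.prod_ne_zero_iff.mpr fun k hk =>
      sub_ne_zero.mpr (hβmono.injective.ne (Finset.ne_of_mem_erase hk))
  have hC'ne : ∀ j, (∏ k ∈ Finset.univ.erase j, (γh k - γh j)) ≠ 0 := fun j =>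
    Finset.prod_ne_zero_iff.mpr fun k hk =>
      sub_ne_zero.mpr (hγmono.injective.ne (Finset.ne_of_mem_erase hk))
  have hβγpos : ∀ i, (0:ℝ) < ∏ k, (βh i + γh k) :=
    fun i => Finset.prod_pos fun k _ => by have := hβpos i; have := hγpos k; linarith
  have hγβpos : ∀ j, (0:ℝ) < ∏ i, (γh j + βh i) :=
    fun j => Finset.prod_pos fun i _ => by have := hγpos j; have := hβpos i; linarith
  have hβEpos : ∀ i, (0:ℝ) < ∏ k ∈ Finset.univ.erase i, βh k :=
    fun i => Finset.prod_pos fun k _ => hβpos k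
  have hγEpos : ∀ j, (0:ℝ) < ∏ k ∈ Finset.univ.erase j, γh k :=
    fun j => Finset.prod_pos fun k _ => hγpos k
  -- the three residue computations
  have claim0 : P.eval 0 / (∏ y ∈ S.erase 0, ((0:ℝ) - y)) = sg * e := by
    rw [hprod0, hevalP, hnegβ, hedef]
    simp only [sub_zero, zero_add]
    rw [div_eq_iff (by positivity)]
    field_simp
    linear_combination (-1) * hsg2
  have claimβ : ∀ i, P.eval (βh i) / (∏ y ∈ S.erase (βh i), (βh i - y)) = -(sg * e) * H i := by
    intro i
    rw [hprodβ i, hevalP, hAi i, hH i, hedef,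
      ← Finset.mul_prod_erase Finset.univ βh (Finset.mem_univ i)]
    have h1 : βh i ≠ 0 := ne_of_gt (hβpos i)
    have h2 := hA'ne i
    have h3 : (∏ k, (βh i + γh k)) ≠ 0 := ne_of_gt (hβγpos i)
    have h4 : (∏ k ∈ Finset.univ.erase i, βh k) ≠ 0 := ne_of_gt (hβEpos i)
    field_simp
    linear_combination ((∏ k, (η k - βh i)) * ∏ k, (βh i + ϑ k)) * hsg2
  have claimγ : ∀ j, P.eval (-γh j) / (∏ y ∈ S.erase (-γh j), ((-γh j) - y)) = (sg * e) * N j := by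
    intro j
    rw [hprodγ j, hevalP, hGj j, hN j, hedef,
      ← Finset.mul_prod_erase Finset.univ γh (Finset.mem_univ j)]
    have h1 : γh j ≠ 0 := ne_of_gt (hγpos j)
    have h2 := hC'ne j
    have h3 : (∏ i, (γh j + βh i)) ≠ 0 := ne_of_gt (hγβpos j)
    have h4 : (∏ k ∈ Finset.univ.erase j, γh k) ≠ 0 := ne_of_gt (hγEpos j)
    have h5 : ∀ k : Fin m, η k - (-γh j) = γh j + η k := fun k => by ring
    have h6 : ∀ k : Fin n, -γh j + ϑ k = ϑ k - γh j := fun k => by ring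
    simp only [h5, h6]
    field_simp
    linear_combination ((∏ x, (γh j + η x)) * ∏ x, (ϑ x - γh j)) * hsg2
  -- assemble
  rw [hsum] at E1 E2
  simp only [claim0, claimβ, claimγ] at E1
  simp only [← Finset.mul_sum] at E1
  have first : (∑ i, H i) = 1 + ∑ j, N j :=
    mul_left_cancel₀ hse (by linear_combination -E1)
  refine ⟨first, ?_⟩
  simp only [Polynomial.eval_mul, Polynomial.eval_X, mul_div_assoc] at E2
  simp only [claim0, claimβ, claimγ, zero_mul, zero_add] at E2
  have hA2 : ∑ x : Fin (m+1), βh x * (-(sg*e) * H x) = -((sg*e) * ∑ i, H i * βh i) := by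
    rw [Finset.mul_sum, ← Finset.sum_neg_distrib]
    exact Finset.sum_congr rfl fun x _ => by ring
  have hB2 : ∑ x : Fin (n+1), -γh x * ((sg*e) * N x) = -((sg*e) * ∑ j, N j * γh j) := by
    rw [Finset.mul_sum, ← Finset.sum_neg_distrib]
    exact Finset.sum_congr rfl fun x _ => by ring
  rw [hA2, hB2] at E2
  have key2 : (sg * e) * ((∑ i, H i * βh i) + ∑ j, N j * γh j) = (sg * e) * 0 := by
    linear_combination -E2
  simpa using mul_left_cancel₀ hse key2
end

section
/- For every k = 1, …, n one has ∑_{i=1}^{m+1} H_i ϑ_k/(ϑ_k + β̂_i) − ∑_{j=1}^{n+1} N_j ϑ_k/(ϑ_k − γ̂_j) − 1 = 0. -/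
open Polynomial Finset

lemma lagrange_eval_sum {ι : Type*} [Fintype ι] [DecidableEq ι] (v : ι → ℝ)
    (hv : Function.Injective v) (P : ℝ[X]) (hdeg : P.degree < Fintype.card ι) (t : ℝ) :
    P.eval t = ∑ s, P.eval (v s) *
      ∏ u ∈ Finset.univ.erase s, ((v s - v u)⁻¹ * (t - v u)) := by
  have h := Lagrange.eq_interpolate (s := Finset.univ) (v := v) hv.injOn
    (by simpa using hdeg)
  conv_lhs => rw [h]
  rw [Lagrange.interpolate_apply]
  rw [Polynomial.eval_finset_sum]
  refine Finset.sum_congr rfl fun s _ => ?_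
  simp [Lagrange.basis, Lagrange.basisDivisor, eval_prod]

lemma lagrange_frac {ι : Type*} [Fintype ι] [DecidableEq ι] (v : ι → ℝ)
    (hv : Function.Injective v) (P : ℝ[X]) (hdeg : P.degree < Fintype.card ι)
    (t : ℝ) (ht : ∀ s, t ≠ v s) :
    ∑ s, P.eval (v s) * (∏ u ∈ Finset.univ.erase s, (v s - v u))⁻¹ / (t - v s)
      = P.eval t / ∏ u, (t - v u) := by
  have hts : ∀ s, t - v s ≠ 0 := fun s => sub_ne_zero.mpr (ht s)
  rw [eq_div_iff (Finset.prod_ne_zero_iff.mpr fun s _ => hts s),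
    lagrange_eval_sum v hv P hdeg t, Finset.sum_mul]
  refine Finset.sum_congr rfl fun s _ => ?_
  rw [← Finset.mul_prod_erase _ _ (Finset.mem_univ s), Finset.prod_mul_distrib,
    Finset.prod_inv_distrib]
  calc P.eval (v s) * (∏ u ∈ Finset.univ.erase s, (v s - v u))⁻¹ / (t - v s) *
        ((t - v s) * ∏ u ∈ Finset.univ.erase s, (t - v u))
      = P.eval (v s) * ((∏ u ∈ Finset.univ.erase s, (v s - v u))⁻¹ *
          ∏ u ∈ Finset.univ.erase s, (t - v u)) * ((t - v s) / (t - v s)) := by ring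
    _ = P.eval (v s) * ((∏ u ∈ Finset.univ.erase s, (v s - v u))⁻¹ *
          ∏ u ∈ Finset.univ.erase s, (t - v u)) := by rw [div_self (hts s), mul_one]

lemma prod_erase_inl {α β M : Type*} [Fintype α] [Fintype β] [DecidableEq α] [DecidableEq β]
    [CommMonoid M] (f : α ⊕ β → M) (i : α) :
    ∏ u ∈ Finset.univ.erase (Sum.inl i), f u
      = (∏ a ∈ Finset.univ.erase i, f (Sum.inl a)) * ∏ b, f (Sum.inr b) := by
  rw [show (Finset.univ.erase (Sum.inl i) : Finset (α ⊕ β))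
      = (Finset.univ.erase i).disjSum Finset.univ by
    ext x; cases x <;> simp]
  rw [Finset.prod_disjSum]

lemma prod_erase_inr {α β M : Type*} [Fintype α] [Fintype β] [DecidableEq α] [DecidableEq β]
    [CommMonoid M] (f : α ⊕ β → M) (j : β) :
    ∏ u ∈ Finset.univ.erase (Sum.inr j), f u
      = (∏ a, f (Sum.inl a)) * ∏ b ∈ Finset.univ.erase j, f (Sum.inr b) := by
  rw [show (Finset.univ.erase (Sum.inr j) : Finset (α ⊕ β))
      = Finset.univ.disjSum (Finset.univ.erase j) by
    ext x; cases x <;> simp]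
  rw [Finset.prod_disjSum]

lemma prod_neg' {α : Type*} (s : Finset α) (f : α → ℝ) :
    ∏ a ∈ s, (-f a) = (-1) ^ s.card * ∏ a ∈ s, f a := by
  rw [show (fun a => -f a) = (fun a => (-1) * f a) by funext a; ring]
  rw [Finset.prod_mul_distrib, Finset.prod_const]

set_option maxHeartbeats 1000000 in
/-- Third identity of (C.3): with the coefficients `H_i`, `N_j` of (3.5), for every
`k = 1, …, n`, `∑_i H_i ϑ_k/(ϑ_k + β̂_i) − ∑_j N_j ϑ_k/(ϑ_k − γ̂_j) − 1 = 0`. -/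
theorem stmt_10 (m n : ℕ) (hm : 1 ≤ m) (hn : 1 ≤ n)
    (η : Fin m → ℝ) (ϑ : Fin n → ℝ)
    (βh : Fin (m + 1) → ℝ) (γh : Fin (n + 1) → ℝ)
    (hβ0 : 0 < βh 0)
    (hβint : ∀ k : Fin m, βh k.castSucc < η k ∧ η k < βh k.succ)
    (hγ0 : 0 < γh 0)
    (hγint : ∀ k : Fin n, γh k.castSucc < ϑ k ∧ ϑ k < γh k.succ)
    (H : Fin (m + 1) → ℝ)
    (hH : ∀ i, H i =
      ((∏ k, (η k - βh i)) * (∏ k ∈ Finset.univ.erase i, βh k) *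
          (∏ k, (βh i + ϑ k)) * (∏ k, γh k)) /
        ((∏ k, η k) * (∏ k ∈ Finset.univ.erase i, (βh k - βh i)) *
          (∏ k, ϑ k) * (∏ k, (βh i + γh k))))
    (N : Fin (n + 1) → ℝ)
    (hN : ∀ j, N j =
      -(((∏ k, (ϑ k - γh j)) * (∏ k ∈ Finset.univ.erase j, γh k) *
          (∏ k, (γh j + η k)) * (∏ k, βh k)) /
        ((∏ k, ϑ k) * (∏ k ∈ Finset.univ.erase j, (γh k - γh j)) *
          (∏ k, η k) * (∏ k, (γh j + βh k))))) :
    ∀ k : Fin n,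
      (∑ i, H i * ϑ k / (ϑ k + βh i)) - (∑ j, N j * ϑ k / (ϑ k - γh j)) - 1 = 0 := by
  classical
  have hβmono : StrictMono βh := by
    rw [Fin.strictMono_iff_lt_succ]
    exact fun i => (hβint i).1.trans (hβint i).2
  have hγmono : StrictMono γh := by
    rw [Fin.strictMono_iff_lt_succ]
    exact fun i => (hγint i).1.trans (hγint i).2
  have hβpos : ∀ i, 0 < βh i := fun i => lt_of_lt_of_le hβ0 (hβmono.monotone (Fin.zero_le i))
  have hγpos : ∀ i, 0 < γh i := fun i => lt_of_lt_of_le hγ0 (hγmono.monotone (Fin.zero_le i))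
  have hηpos : ∀ k, 0 < η k := fun k => (hβpos _).trans (hβint k).1
  have hϑpos : ∀ k, 0 < ϑ k := fun k => (hγpos _).trans (hγint k).1
  intro k
  set t : ℝ := ϑ k with htdef
  have htpos : 0 < t := hϑpos k
  have htγ : ∀ j, γh j ≠ t := by
    intro j
    rcases le_or_gt (j : ℕ) (k : ℕ) with h | h
    · have h1 : γh j ≤ γh (Fin.castSucc k) := hγmono.monotone (by simp [Fin.le_def, h])
      have h2 := (hγint k).1
      intro he; rw [he] at h1; rw [htdef] at h1; linarith
    · have h1 : γh (Fin.succ k) ≤ γh j := hγmono.monotone (by simp [Fin.le_def]; omega)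
      have h2 := (hγint k).2
      intro he; rw [he] at h1; rw [htdef] at h1; linarith
  -- the nodes
  set v : Fin (m + 1) ⊕ Fin (n + 1) → ℝ := Sum.elim (fun i => -βh i) γh with hvdef
  have hvinl : ∀ i, v (Sum.inl i) = -βh i := fun _ => rfl
  have hvinr : ∀ j, v (Sum.inr j) = γh j := fun _ => rfl
  have hvinj : Function.Injective v := by
    rintro (a | a) (b | b) h <;>
      simp only [hvdef, Sum.elim_inl, Sum.elim_inr] at h
    · exact congrArg Sum.inl (hβmono.injective (neg_injective h))
    · exfalso; have := hβpos a; have := hγpos b; linarith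
    · exfalso; have := hβpos b; have := hγpos a; linarith
    · exact congrArg Sum.inr (hγmono.injective h)
  -- the polynomial
  set P : Polynomial ℝ := (∏ k : Fin m, (Polynomial.X + Polynomial.C (η k))) *
    (∏ k : Fin n, (Polynomial.C (ϑ k) - Polynomial.X)) with hPdef
  have hPdeg : P.degree < Fintype.card (Fin (m + 1) ⊕ Fin (n + 1)) := by
    have h1 : (∏ k : Fin m, (Polynomial.X + Polynomial.C (η k))).natDegree ≤ m := by
      refine le_trans (Polynomial.natDegree_prod_le _ _) ?_
      simp [Polynomial.natDegree_X_add_C]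
    have h2 : (∏ k : Fin n, (Polynomial.C (ϑ k) - Polynomial.X)).natDegree ≤ n := by
      refine le_trans (Polynomial.natDegree_prod_le _ _) ?_
      have he : ∀ k : Fin n, (Polynomial.C (ϑ k) - Polynomial.X).natDegree = 1 := by
        intro k
        rw [show Polynomial.C (ϑ k) - Polynomial.X
            = -(Polynomial.X - Polynomial.C (ϑ k)) by ring,
          Polynomial.natDegree_neg, Polynomial.natDegree_X_sub_C]
      simp [he]
    have h3 : P.natDegree ≤ m + n :=
      le_trans (Polynomial.natDegree_mul_le) (add_le_add h1 h2)
    have h4 : P.degree ≤ (↑(m + n) : WithBot ℕ) :=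
      le_trans Polynomial.degree_le_natDegree (by exact_mod_cast h3)
    have hcard : Fintype.card (Fin (m + 1) ⊕ Fin (n + 1)) = m + n + 2 := by
      simp [Fintype.card_sum]; ring
    rw [hcard]
    exact lt_of_le_of_lt h4 (by exact_mod_cast (by omega : m + n < m + n + 2))
  have hPeval : ∀ x : ℝ, P.eval x = (∏ k, (x + η k)) * (∏ k, (ϑ k - x)) := by
    intro x; simp [hPdef, Polynomial.eval_prod]
  -- residue coefficients
  set A : Fin (m + 1) ⊕ Fin (n + 1) → ℝ :=
    fun s => P.eval (v s) * (∏ u ∈ Finset.univ.erase s, (v s - v u))⁻¹ with hAdef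
  -- evaluation at t
  have E1 : ∑ s, A s / (t - v s) = 0 := by
    have ht1 : ∀ s, t ≠ v s := by
      rintro (a | a)
      · rw [hvinl]; have := hβpos a; intro he; linarith
      · rw [hvinr]; exact fun he => htγ a he.symm
    have h := lagrange_frac v hvinj P hPdeg t ht1
    have hP0 : P.eval t = 0 := by
      rw [hPeval]
      have : (∏ k' : Fin n, (ϑ k' - t)) = 0 :=
        Finset.prod_eq_zero (Finset.mem_univ k) (by rw [htdef]; ring)
      rw [this, mul_zero]
    rw [hAdef]
    simp only []
    rw [h, hP0, zero_div]
  -- evaluation at 0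
  have E2 : ∑ s, A s / (0 - v s)
      = ((∏ k, η k) * ∏ k, ϑ k) / ∏ u, ((0 : ℝ) - v u) := by
    have ht0 : ∀ s, (0 : ℝ) ≠ v s := by
      rintro (a | a)
      · rw [hvinl]; have := hβpos a; intro he; linarith
      · rw [hvinr]; have := hγpos a; intro he; linarith
    have h := lagrange_frac v hvinj P hPdeg 0 ht0
    have hP0 : P.eval 0 = (∏ k, η k) * ∏ k, ϑ k := by
      rw [hPeval]; simp
    rw [hAdef]
    simp only []
    rw [h, hP0]
  -- sign bookkeeping
  set F : ℝ := (-1 : ℝ) ^ n with hFdef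
  have hF0 : F ≠ 0 := by rw [hFdef]; exact pow_ne_zero _ (by norm_num)
  have hneg : ∀ g : Fin (n + 1) → ℝ, (∏ b, (-(g b))) = -(F * ∏ b, g b) := by
    intro g
    rw [prod_neg' Finset.univ g, Finset.card_univ, Fintype.card_fin, hFdef, pow_succ]
    ring
  have hD0 : (∏ u, ((0:ℝ) - v u)) = (∏ a, βh a) * -(F * ∏ b, γh b) := by
    rw [Fintype.prod_sum_type]
    congr 1
    · exact Finset.prod_congr rfl fun a _ => by rw [hvinl]; ring
    · rw [← hneg]; exact Finset.prod_congr rfl fun b _ => by rw [hvinr]; ring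
  set c : ℝ := (∏ u, ((0:ℝ) - v u)) / ((∏ k, η k) * ∏ k, ϑ k) with hcdef
  have hHη : (∏ k, η k) ≠ 0 := ne_of_gt (Finset.prod_pos fun _ _ => hηpos _)
  have hHϑ : (∏ k, ϑ k) ≠ 0 := ne_of_gt (Finset.prod_pos fun _ _ => hϑpos _)
  have hB : (∏ a, βh a) ≠ 0 := ne_of_gt (Finset.prod_pos fun _ _ => hβpos _)
  have hΓ : (∏ b, γh b) ≠ 0 := ne_of_gt (Finset.prod_pos fun _ _ => hγpos _)
  have hc0 : c ≠ 0 := by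
    rw [hcdef, hD0]
    exact div_ne_zero
      (mul_ne_zero hB (neg_ne_zero.mpr (mul_ne_zero hF0 hΓ))) (mul_ne_zero hHη hHϑ)
  have E2' : ∑ s, A s / (0 - v s) = c⁻¹ := by rw [E2, hcdef, inv_div]
  -- per-term identity, left part
  have Tinl : ∀ i, H i * t / (t + βh i)
      = c * (A (Sum.inl i) / (0 - v (Sum.inl i)) - A (Sum.inl i) / (t - v (Sum.inl i))) := by
    intro i
    have e1 : (∏ k', (-βh i + η k')) = ∏ k', (η k' - βh i) :=
      Finset.prod_congr rfl fun _ _ => by ring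
    have e2 : (∏ k', (ϑ k' - -βh i)) = ∏ k', (ϑ k' + βh i) :=
      Finset.prod_congr rfl fun _ _ => by ring
    have e3 : (∏ a ∈ Finset.univ.erase i, (-βh i - -βh a))
        = ∏ a ∈ Finset.univ.erase i, (βh a - βh i) :=
      Finset.prod_congr rfl fun _ _ => by ring
    have e4 : (∏ b, (-βh i - γh b)) = -(F * ∏ b, (βh i + γh b)) := by
      rw [← hneg]; exact Finset.prod_congr rfl fun b _ => by ring
    have hAi : A (Sum.inl i)
        = ((∏ k', (η k' - βh i)) * ∏ k', (ϑ k' + βh i)) *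
          ((∏ a ∈ Finset.univ.erase i, (βh a - βh i)) * -(F * ∏ b, (βh i + γh b)))⁻¹ := by
      rw [hAdef]
      simp only []
      rw [prod_erase_inl (fun u => v (Sum.inl i) - v u) i]
      simp only [hvdef, Sum.elim_inl, Sum.elim_inr]
      rw [hPeval, e1, e2, e3, e4]
    have e5 : (∏ k', (βh i + ϑ k')) = ∏ k', (ϑ k' + βh i) :=
      Finset.prod_congr rfl fun _ _ => by ring
    have hβi : βh i ≠ 0 := ne_of_gt (hβpos i)
    have htβ : t + βh i ≠ 0 := ne_of_gt (by have := hβpos i; linarith)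
    have hD1 : (∏ a ∈ Finset.univ.erase i, (βh a - βh i)) ≠ 0 :=
      Finset.prod_ne_zero_iff.mpr fun a ha =>
        sub_ne_zero.mpr fun he => (Finset.mem_erase.mp ha).1 (hβmono.injective he)
    have hG1 : (∏ b, (βh i + γh b)) ≠ 0 :=
      ne_of_gt (Finset.prod_pos fun b _ => by have := hβpos i; have := hγpos b; linarith)
    rw [hAi, hH i, hcdef, hD0, hvinl, e5,
      ← Finset.mul_prod_erase Finset.univ βh (Finset.mem_univ i)]
    have h0v : (0 : ℝ) - -βh i = βh i := by ring
    have htv : t - -βh i = t + βh i := by ring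
    rw [h0v, htv]
    field_simp
    ring
  -- per-term identity, right part
  have Tinr : ∀ j, -(N j * t / (t - γh j))
      = c * (A (Sum.inr j) / (0 - v (Sum.inr j)) - A (Sum.inr j) / (t - v (Sum.inr j))) := by
    intro j
    have e1 : (∏ k', (γh j + η k')) = ∏ k', (γh j + η k') := rfl
    have e3 : (∏ b ∈ Finset.univ.erase j, (γh j - γh b))
        = F * ∏ b ∈ Finset.univ.erase j, (γh b - γh j) := by
      have : (∏ b ∈ Finset.univ.erase j, (γh j - γh b))
          = ∏ b ∈ Finset.univ.erase j, (-(γh b - γh j)) :=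
        Finset.prod_congr rfl fun _ _ => by ring
      rw [this, prod_neg', Finset.card_erase_of_mem (Finset.mem_univ j),
        Finset.card_univ, Fintype.card_fin, hFdef]
      norm_num
    have hAj : A (Sum.inr j)
        = ((∏ k', (γh j + η k')) * ∏ k', (ϑ k' - γh j)) *
          ((∏ a, (γh j + βh a)) *
            (F * ∏ b ∈ Finset.univ.erase j, (γh b - γh j)))⁻¹ := by
      rw [hAdef]
      simp only []
      rw [prod_erase_inr (fun u => v (Sum.inr j) - v u) j]
      simp only [hvdef, Sum.elim_inl, Sum.elim_inr]
      have e2 : (∏ a, (γh j - -βh a)) = ∏ a, (γh j + βh a) :=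
        Finset.prod_congr rfl fun _ _ => by ring
      rw [hPeval, ← e3, e2]
    have hγj : γh j ≠ 0 := ne_of_gt (hγpos j)
    have htγj : t - γh j ≠ 0 := sub_ne_zero.mpr fun he => htγ j he.symm
    have hD2 : (∏ b ∈ Finset.univ.erase j, (γh b - γh j)) ≠ 0 :=
      Finset.prod_ne_zero_iff.mpr fun b hb =>
        sub_ne_zero.mpr fun he => (Finset.mem_erase.mp hb).1 (hγmono.injective he)
    have hG2 : (∏ a, (γh j + βh a)) ≠ 0 :=
      ne_of_gt (Finset.prod_pos fun a _ => by have := hγpos j; have := hβpos a; linarith)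
    rw [hAj, hN j, hcdef, hD0, hvinr,
      ← Finset.mul_prod_erase Finset.univ γh (Finset.mem_univ j)]
    have h0v : (0 : ℝ) - γh j = -γh j := by ring
    rw [h0v]
    field_simp
    ring
  -- assemble
  have lhs1 : (∑ i, H i * t / (t + βh i))
      = ∑ i, c * (A (Sum.inl i) / (0 - v (Sum.inl i)) - A (Sum.inl i) / (t - v (Sum.inl i))) :=
    Finset.sum_congr rfl fun i _ => Tinl i
  have lhs2 : (∑ j, N j * t / (t - γh j))
      = -∑ j, c * (A (Sum.inr j) / (0 - v (Sum.inr j)) - A (Sum.inr j) / (t - v (Sum.inr j))) := by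
    rw [← Finset.sum_neg_distrib]
    exact Finset.sum_congr rfl fun j _ => (neg_eq_iff_eq_neg.mp (Tinr j)).symm ▸ rfl
  rw [lhs1, lhs2, sub_neg_eq_add, ← Fintype.sum_sum_type
    (f := fun s => c * (A s / (0 - v s) - A s / (t - v s)))]
  have : (∑ s, c * (A s / (0 - v s) - A s / (t - v s)))
      = c * ((∑ s, A s / (0 - v s)) - ∑ s, A s / (t - v s)) := by
    rw [← Finset.sum_sub_distrib, Finset.mul_sum]
  rw [this, E1, E2', sub_zero, mul_inv_cancel₀ hc0, sub_self]
end

section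
/- The following identities hold: (i) ∑_{i=1}^{m+1} Û_i − ∑_{j=1}^{n+1} V̂_j − 1 = 0; (ii) ∑_{i=1}^{m+1} Û_i β_i + ∑_{j=1}^{n+1} V̂_j γ_j = 0; (iii) for every k = 1, …, n, ∑_{i=1}^{m+1} Û_i ϑ_k/(ϑ_k + β_i) − ∑_{j=1}^{n+1} V̂_j ϑ_k/(ϑ_k − γ_j) − 1 = 0; (iv) for every k = 1, …, m, ∑_{i=1}^{m+1} Û_i η_k/(η_k − β_i) − ∑_{j=1}^{n+1} V̂_j η_k/(η_k + γ_j) − 1 = 0. -/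
open Finset Polynomial

lemma aux_prod_neg' {ι : Type*} (s : Finset ι) (f : ι → ℝ) :
    ∏ k ∈ s, (-f k) = (-1) ^ s.card * ∏ k ∈ s, f k := by
  rw [← Finset.prod_const, ← Finset.prod_mul_distrib]
  simp

lemma aux_lagrange_pf {ι : Type*} [Fintype ι] [DecidableEq ι] (x : ι → ℝ)
    (hx : Function.Injective x) (P : ℝ[X]) (hdeg : P.degree < Fintype.card ι)
    (a : ℝ) (ha : ∀ i, a ≠ x i) :
    P.eval a / ∏ i, (a - x i)
      = ∑ i, P.eval (x i) / ((a - x i) * ∏ k ∈ Finset.univ.erase i, (x i - x k)) := by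
  have hdeg' : P.degree < (univ : Finset ι).card := by simpa using hdeg
  have h := Lagrange.eq_interpolate (v := x) hx.injOn hdeg'
  have ha' := congrArg (Polynomial.eval a) h
  rw [Lagrange.interpolate_apply, Polynomial.eval_finset_sum] at ha'
  simp only [eval_mul, eval_C, Lagrange.basis, Lagrange.basisDivisor, eval_prod,
    eval_mul, eval_C, eval_sub, eval_X] at ha'
  rw [ha', Finset.sum_div]
  refine Finset.sum_congr rfl fun i _ => ?_
  have h1 : (∏ k, (a - x k)) = (a - x i) * ∏ k ∈ univ.erase i, (a - x k) :=
    (Finset.mul_prod_erase univ _ (mem_univ i)).symm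
  have h2 : ∏ k ∈ univ.erase i, ((x i - x k)⁻¹ * (a - x k))
      = (∏ k ∈ univ.erase i, (x i - x k))⁻¹ * ∏ k ∈ univ.erase i, (a - x k) := by
    rw [Finset.prod_mul_distrib, ← Finset.prod_inv_distrib]
  have hne1 : (a - x i) ≠ 0 := sub_ne_zero.mpr (ha i)
  have hne2 : (∏ k ∈ univ.erase i, (x i - x k)) ≠ 0 :=
    Finset.prod_ne_zero_iff.mpr fun k hk => sub_ne_zero.mpr
      (fun h => (Finset.mem_erase.mp hk).1 (hx h.symm))
  have hne3 : (∏ k ∈ univ.erase i, (a - x k)) ≠ 0 :=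
    Finset.prod_ne_zero_iff.mpr fun k _ => sub_ne_zero.mpr (ha k)
  rw [h1, h2]
  field_simp

set_option maxHeartbeats 2000000 in
/-- The system of equations (3.20) from Remark 3.2, for the coefficients `Û_i`, `V̂_j`
of formula (3.15): (i) `∑_i Û_i − ∑_j V̂_j − 1 = 0`; (ii) `∑_i Û_i β_i + ∑_j V̂_j γ_j = 0`;
(iii) `∑_i Û_i ϑ_k/(ϑ_k + β_i) − ∑_j V̂_j ϑ_k/(ϑ_k − γ_j) − 1 = 0` for `k = 1, …, n`;
(iv) `∑_i Û_i η_k/(η_k − β_i) − ∑_j V̂_j η_k/(η_k + γ_j) − 1 = 0` for `k = 1, …, m`. -/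
theorem stmt_11 (m n : ℕ) (hm : 1 ≤ m) (hn : 1 ≤ n)
    (η : Fin m → ℝ) (ϑ : Fin n → ℝ)
    (β : Fin (m + 1) → ℝ) (γ : Fin (n + 1) → ℝ)
    (hβ0 : 0 < β 0)
    (hβint : ∀ k : Fin m, β k.castSucc < η k ∧ η k < β k.succ)
    (hγ0 : 0 < γ 0)
    (hγint : ∀ k : Fin n, γ k.castSucc < ϑ k ∧ ϑ k < γ k.succ)
    (U : Fin (m + 1) → ℝ)
    (hU : ∀ i, U i =
      ((∏ k, (η k - β i)) * (∏ k ∈ Finset.univ.erase i, β k) *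
          (∏ k, (β i + ϑ k)) * (∏ k, γ k)) /
        ((∏ k, η k) * (∏ k ∈ Finset.univ.erase i, (β k - β i)) *
          (∏ k, ϑ k) * (∏ k, (β i + γ k))))
    (V : Fin (n + 1) → ℝ)
    (hV : ∀ j, V j =
      -(((∏ k, (ϑ k - γ j)) * (∏ k ∈ Finset.univ.erase j, γ k) *
          (∏ k, (γ j + η k)) * (∏ k, β k)) /
        ((∏ k, ϑ k) * (∏ k ∈ Finset.univ.erase j, (γ k - γ j)) *
          (∏ k, η k) * (∏ k, (γ j + β k))))) :
    ((∑ i, U i) - (∑ j, V j) - 1 = 0) ∧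
    ((∑ i, U i * β i) + (∑ j, V j * γ j) = 0) ∧
    (∀ k : Fin n, (∑ i, U i * ϑ k / (ϑ k + β i)) - (∑ j, V j * ϑ k / (ϑ k - γ j)) - 1 = 0) ∧
    (∀ k : Fin m, (∑ i, U i * η k / (η k - β i)) - (∑ j, V j * η k / (η k + γ j)) - 1 = 0) := by
  classical
  -- monotonicity and positivity
  have hβm : StrictMono β := Fin.strictMono_iff_lt_succ.mpr
    fun k => (hβint k).1.trans (hβint k).2
  have hγm : StrictMono γ := Fin.strictMono_iff_lt_succ.mpr
    fun k => (hγint k).1.trans (hγint k).2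
  have hβpos : ∀ i, 0 < β i := fun i => hβ0.trans_le (hβm.monotone (Fin.zero_le i))
  have hγpos : ∀ j, 0 < γ j := fun j => hγ0.trans_le (hγm.monotone (Fin.zero_le j))
  have hηpos : ∀ k, 0 < η k := fun k => (hβpos _).trans (hβint k).1
  have hϑpos : ∀ k, 0 < ϑ k := fun k => (hγpos _).trans (hγint k).1
  have hηβ : ∀ (k : Fin m) (i : Fin (m + 1)), η k ≠ β i := by
    intro k i
    rcases le_or_gt i k.castSucc with hle | hlt
    · exact (lt_of_le_of_lt (hβm.monotone hle) (hβint k).1).ne'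
    · exact (lt_of_lt_of_le (hβint k).2 (hβm.monotone (Fin.castSucc_lt_iff_succ_le.mp hlt))).ne
  have hϑγ : ∀ (k : Fin n) (j : Fin (n + 1)), ϑ k ≠ γ j := by
    intro k j
    rcases le_or_gt j k.castSucc with hle | hlt
    · exact (lt_of_le_of_lt (hγm.monotone hle) (hγint k).1).ne'
    · exact (lt_of_lt_of_le (hγint k).2 (hγm.monotone (Fin.castSucc_lt_iff_succ_le.mp hlt))).ne
  -- basic nonvanishing
  have hPηne : (∏ k, η k) ≠ 0 := Finset.prod_ne_zero_iff.mpr fun k _ => (hηpos k).ne'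
  have hPϑne : (∏ k, ϑ k) ≠ 0 := Finset.prod_ne_zero_iff.mpr fun k _ => (hϑpos k).ne'
  have hPβne : (∏ k, β k) ≠ 0 := Finset.prod_ne_zero_iff.mpr fun k _ => (hβpos k).ne'
  have hPγne : (∏ k, γ k) ≠ 0 := Finset.prod_ne_zero_iff.mpr fun k _ => (hγpos k).ne'
  -- the node function
  set x : Fin (m + 1) ⊕ Fin (n + 1) → ℝ := Sum.elim β (fun j => -γ j) with hxdef
  have hxinj : Function.Injective x := by
    rintro (i | i) (j | j) h <;> simp only [hxdef, Sum.elim_inl, Sum.elim_inr] at h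
    · exact congrArg Sum.inl (hβm.injective h)
    · exfalso; have := hβpos i; have := hγpos j; linarith
    · exfalso; have := hβpos j; have := hγpos i; linarith
    · exact congrArg Sum.inr (hγm.injective (neg_injective h))
  have hcard : Fintype.card (Fin (m + 1) ⊕ Fin (n + 1)) = m + n + 2 := by
    simp [Fintype.card_sum]; omega
  -- the polynomial
  set P : ℝ[X] := (∏ k, (Polynomial.C (η k) - Polynomial.X)) *
    (∏ k, (Polynomial.X + Polynomial.C (ϑ k))) with hPdef
  have hPeval : ∀ z : ℝ, P.eval z = (∏ k, (η k - z)) * (∏ k, (z + ϑ k)) := by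
    intro z; simp [hPdef, Polynomial.eval_prod]
  have hPnd : P.natDegree ≤ m + n := by
    rw [hPdef]
    refine (Polynomial.natDegree_mul_le).trans ?_
    have h1 : (∏ k : Fin m, (Polynomial.C (η k) - Polynomial.X)).natDegree ≤ m := by
      refine (Polynomial.natDegree_prod_le (f := fun k : Fin m => Polynomial.C (η k) - Polynomial.X) (s := Finset.univ)).trans ?_
      have hd : ∀ k : Fin m, (Polynomial.C (η k) - Polynomial.X).natDegree ≤ 1 := by
        intro k
        rw [show Polynomial.C (η k) - Polynomial.X = -(Polynomial.X - Polynomial.C (η k)) by ring,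
          Polynomial.natDegree_neg, Polynomial.natDegree_X_sub_C]
      calc ∑ k : Fin m, (Polynomial.C (η k) - Polynomial.X).natDegree
          ≤ ∑ _k : Fin m, 1 := by exact Finset.sum_le_sum fun k _ => hd k
        _ = m := by simp
    have h2 : (∏ k : Fin n, (Polynomial.X + Polynomial.C (ϑ k))).natDegree ≤ n := by
      refine (Polynomial.natDegree_prod_le (f := fun k : Fin n => Polynomial.X + Polynomial.C (ϑ k)) (s := Finset.univ)).trans ?_
      have hd2 : ∀ k : Fin n, (Polynomial.X + Polynomial.C (ϑ k)).natDegree ≤ 1 :=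
        fun k => (Polynomial.natDegree_X_add_C (ϑ k)).le
      calc ∑ k : Fin n, (Polynomial.X + Polynomial.C (ϑ k)).natDegree
          ≤ ∑ _k : Fin n, 1 := by exact Finset.sum_le_sum fun k _ => hd2 k
        _ = n := by simp
    omega
  have hdegP : P.degree < ((m + n + 2 : ℕ) : WithBot ℕ) :=
    lt_of_le_of_lt (Polynomial.degree_le_natDegree)
      (by exact_mod_cast by omega)
  -- weights
  set wβ : Fin (m + 1) → ℝ := fun i =>
    (∏ k ∈ Finset.univ.erase i, (β i - β k)) * (∏ j, (β i + γ j)) with hwβdef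
  set wγ : Fin (n + 1) → ℝ := fun j =>
    (∏ i, (-γ j - β i)) * (∏ k ∈ Finset.univ.erase j, (-γ j + γ k)) with hwγdef
  have hwβne : ∀ i, wβ i ≠ 0 := by
    intro i
    refine mul_ne_zero (Finset.prod_ne_zero_iff.mpr fun k hk => sub_ne_zero.mpr ?_)
      (Finset.prod_ne_zero_iff.mpr fun j _ => by
        have := hβpos i; have := hγpos j; intro h; linarith)
    exact fun h => (Finset.mem_erase.mp hk).1 (hβm.injective h.symm)
  have hwγne : ∀ j, wγ j ≠ 0 := by
    intro j
    refine mul_ne_zero (Finset.prod_ne_zero_iff.mpr fun i _ => by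
        have := hβpos i; have := hγpos j; intro h; linarith)
      (Finset.prod_ne_zero_iff.mpr fun k hk => ?_)
    have hne : γ k ≠ γ j := fun h => (Finset.mem_erase.mp hk).1 (hγm.injective h)
    intro h; exact hne (by linarith)
  -- erase products over the sum type
  have heraseL : ∀ (i : Fin (m + 1)) (f : Fin (m + 1) ⊕ Fin (n + 1) → ℝ),
      ∏ k ∈ Finset.univ.erase (Sum.inl i), f k
        = (∏ k ∈ Finset.univ.erase i, f (Sum.inl k)) * ∏ j, f (Sum.inr j) := by
    intro i f
    rw [show (Finset.univ : Finset (Fin (m + 1) ⊕ Fin (n + 1))).erase (Sum.inl i)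
        = (Finset.univ.erase i).disjSum Finset.univ from by ext y; cases y <;> simp,
      Finset.prod_disjSum]
  have heraseR : ∀ (j : Fin (n + 1)) (f : Fin (m + 1) ⊕ Fin (n + 1) → ℝ),
      ∏ k ∈ Finset.univ.erase (Sum.inr j), f k
        = (∏ i, f (Sum.inl i)) * ∏ k ∈ Finset.univ.erase j, f (Sum.inr k) := by
    intro j f
    rw [show (Finset.univ : Finset (Fin (m + 1) ⊕ Fin (n + 1))).erase (Sum.inr j)
        = Finset.univ.disjSum (Finset.univ.erase j) from by ext y; cases y <;> simp,
      Finset.prod_disjSum]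
  -- the key partial-fraction identity
  have KEY : ∀ (Q : ℝ[X]), Q.degree < ((m + n + 2 : ℕ) : WithBot ℕ) → ∀ a : ℝ,
      (∀ i, a ≠ β i) → (∀ j, a ≠ -γ j) →
      Q.eval a / ((∏ i, (a - β i)) * ∏ j, (a + γ j))
        = (∑ i, Q.eval (β i) / ((a - β i) * wβ i))
          + ∑ j, Q.eval (-γ j) / ((a + γ j) * wγ j) := by
    intro Q hQ a ha1 ha2
    have ha : ∀ i, a ≠ x i := by
      rintro (i | j)
      · simpa [hxdef] using ha1 i
      · simpa [hxdef] using ha2 j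
    have h := aux_lagrange_pf x hxinj Q (by rw [hcard]; exact hQ) a ha
    rw [Fintype.prod_sum_type, Fintype.sum_sum_type] at h
    simp only [hxdef, Sum.elim_inl, Sum.elim_inr, sub_neg_eq_add] at h
    rw [h]
    congr 1
    · refine Finset.sum_congr rfl fun i _ => ?_
      rw [heraseL i]
      simp [hwβdef]
    · refine Finset.sum_congr rfl fun j _ => ?_
      rw [heraseR j]
      simp [hwγdef]
  -- the constant
  set Cc : ℝ := (-1 : ℝ) ^ m * ((∏ k, β k) * (∏ k, γ k)) / ((∏ k, η k) * (∏ k, ϑ k)) with hCc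
  -- closed forms for U and V
  have hU' : ∀ i, U i = Cc * P.eval (β i) / (β i * wβ i) := by
    intro i
    have hsign : ∏ k ∈ Finset.univ.erase i, (β k - β i)
        = (-1 : ℝ) ^ m * ∏ k ∈ Finset.univ.erase i, (β i - β k) := by
      calc ∏ k ∈ Finset.univ.erase i, (β k - β i)
          = ∏ k ∈ Finset.univ.erase i, -(β i - β k) :=
            Finset.prod_congr rfl fun k _ => by ring
        _ = (-1 : ℝ) ^ (Finset.univ.erase i).card * ∏ k ∈ Finset.univ.erase i, (β i - β k) :=
            aux_prod_neg' _ _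
        _ = (-1 : ℝ) ^ m * ∏ k ∈ Finset.univ.erase i, (β i - β k) := by
            rw [Finset.card_erase_of_mem (Finset.mem_univ i)]; simp
    have hsplit : (∏ k, β k) = β i * ∏ k ∈ Finset.univ.erase i, β k :=
      (Finset.mul_prod_erase Finset.univ β (Finset.mem_univ i)).symm
    have h3 : (∏ k ∈ Finset.univ.erase i, (β i - β k)) ≠ 0 :=
      Finset.prod_ne_zero_iff.mpr fun k hk => sub_ne_zero.mpr
        (fun h => (Finset.mem_erase.mp hk).1 (hβm.injective h.symm))
    have h4 : (∏ k, (β i + γ k)) ≠ 0 :=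
      Finset.prod_ne_zero_iff.mpr fun k _ => by
        have := hβpos i; have := hγpos k; intro h; linarith
    have h5 : β i ≠ 0 := (hβpos i).ne'
    rw [hU i]
    simp only [hPeval, hCc, hwβdef]
    rw [hsign, hsplit]
    rcases Nat.even_or_odd m with hp | hp
    · simp only [hp.neg_one_pow]; field_simp
    · simp only [hp.neg_one_pow]; field_simp
  have hV' : ∀ j, V j = Cc * P.eval (-γ j) / (γ j * wγ j) := by
    intro j
    have hsign : (∏ i, (-γ j - β i)) = (-1 : ℝ) ^ (m + 1) * ∏ i, (γ j + β i) := by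
      calc (∏ i, (-γ j - β i)) = ∏ i, -(γ j + β i) :=
            Finset.prod_congr rfl fun i _ => by ring
        _ = (-1 : ℝ) ^ (Finset.univ : Finset (Fin (m + 1))).card * ∏ i, (γ j + β i) :=
            aux_prod_neg' _ _
        _ = (-1 : ℝ) ^ (m + 1) * ∏ i, (γ j + β i) := by simp
    have hflip : ∏ k ∈ Finset.univ.erase j, (-γ j + γ k)
        = ∏ k ∈ Finset.univ.erase j, (γ k - γ j) :=
      Finset.prod_congr rfl fun k _ => by ring
    have hsplit : (∏ k, γ k) = γ j * ∏ k ∈ Finset.univ.erase j, γ k :=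
      (Finset.mul_prod_erase Finset.univ γ (Finset.mem_univ j)).symm
    have h3 : (∏ k ∈ Finset.univ.erase j, (γ k - γ j)) ≠ 0 :=
      Finset.prod_ne_zero_iff.mpr fun k hk => sub_ne_zero.mpr
        (fun h => (Finset.mem_erase.mp hk).1 (hγm.injective h))
    have h4 : (∏ i, (γ j + β i)) ≠ 0 :=
      Finset.prod_ne_zero_iff.mpr fun i _ => by
        have := hβpos i; have := hγpos j; intro h; linarith
    have h5 : γ j ≠ 0 := (hγpos j).ne'
    have hPev : P.eval (-γ j) = (∏ k, (γ j + η k)) * (∏ k, (ϑ k - γ j)) := by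
      rw [hPeval]
      congr 1
      · exact Finset.prod_congr rfl fun k _ => by ring
      · exact Finset.prod_congr rfl fun k _ => by ring
    rw [hV j]
    simp only [hPev, hCc, hwγdef]
    rw [hsign, hflip, hsplit]
    rcases Nat.even_or_odd m with hp | hp
    · simp only [hp.neg_one_pow, (by simpa using hp.add_one : Odd (m + 1)).neg_one_pow]
      field_simp
    · simp only [hp.neg_one_pow, (by simpa using hp.add_one : Even (m + 1)).neg_one_pow]
      field_simp
  -- part (i)
  have key0 := KEY P hdegP 0 (fun i => (hβpos i).ne)
    (fun j => by have := hγpos j; intro h; linarith)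
  have hPe0 : P.eval 0 = (∏ k, η k) * (∏ k, ϑ k) := by
    rw [hPeval]; simp
  have hprod0β : (∏ i, ((0 : ℝ) - β i)) = (-1 : ℝ) ^ (m + 1) * ∏ i, β i := by
    calc (∏ i, ((0 : ℝ) - β i)) = ∏ i, -(β i) :=
          Finset.prod_congr rfl fun i _ => by ring
      _ = (-1 : ℝ) ^ (Finset.univ : Finset (Fin (m + 1))).card * ∏ i, β i := aux_prod_neg' _ _
      _ = (-1 : ℝ) ^ (m + 1) * ∏ i, β i := by simp
  have hprod0γ : (∏ j, ((0 : ℝ) + γ j)) = ∏ j, γ j :=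
    Finset.prod_congr rfl fun j _ => by ring
  have hUterm0 : ∀ i, U i = -(Cc * (P.eval (β i) / ((0 - β i) * wβ i))) := by
    intro i
    rw [hU' i]
    have h5 : β i ≠ 0 := (hβpos i).ne'
    have h7 := hwβne i
    field_simp
    ring
  have hVterm0 : ∀ j, V j = Cc * (P.eval (-γ j) / ((0 + γ j) * wγ j)) := by
    intro j
    rw [hV' j, zero_add, mul_div_assoc]
  have parti : (∑ i, U i) - (∑ j, V j) - 1 = 0 := by
    have hC1 : -Cc * (P.eval 0 / ((∏ i, ((0 : ℝ) - β i)) * ∏ j, ((0 : ℝ) + γ j))) = 1 := by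
      rw [hPe0, hprod0β, hprod0γ, hCc]
      rcases Nat.even_or_odd m with hp | hp
      · simp only [hp.neg_one_pow, (by simpa using hp.add_one : Odd (m + 1)).neg_one_pow]
        field_simp
        try ring
      · simp only [hp.neg_one_pow, (by simpa using hp.add_one : Even (m + 1)).neg_one_pow]
        field_simp
        try ring
    calc (∑ i, U i) - (∑ j, V j) - 1
        = -Cc * ((∑ i, P.eval (β i) / ((0 - β i) * wβ i))
            + ∑ j, P.eval (-γ j) / ((0 + γ j) * wγ j)) - 1 := by
          rw [Finset.sum_congr rfl fun i _ => hUterm0 i,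
            Finset.sum_congr rfl fun j _ => hVterm0 j,
            Finset.sum_neg_distrib, ← Finset.mul_sum, ← Finset.mul_sum]
          ring
      _ = -Cc * (P.eval 0 / ((∏ i, ((0 : ℝ) - β i)) * ∏ j, ((0 : ℝ) + γ j))) - 1 := by
          rw [← key0]
      _ = 0 := by rw [hC1]; ring
  -- part (ii)
  have hdeg2 : (Polynomial.X * P).degree < ((m + n + 2 : ℕ) : WithBot ℕ) := by
    refine lt_of_le_of_lt Polynomial.degree_le_natDegree ?_
    have hle : (Polynomial.X * P).natDegree ≤ 1 + (m + n) :=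
      le_trans Polynomial.natDegree_mul_le (by rw [Polynomial.natDegree_X]; omega)
    exact_mod_cast by omega
  have key2 := KEY (Polynomial.X * P) hdeg2 0 (fun i => (hβpos i).ne)
    (fun j => by have := hγpos j; intro h; linarith)
  have hzero : ((0 : ℝ) : ℝ) = 0 := rfl
  have partii : (∑ i, U i * β i) + (∑ j, V j * γ j) = 0 := by
    have hsum2 : (∑ i, P.eval (β i) / wβ i) + (∑ j, P.eval (-γ j) / wγ j) = 0 := by
      have e0 : Polynomial.eval (0 : ℝ) (Polynomial.X * P) = 0 := by simp
      rw [e0, zero_div] at key2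
      have e1 : ∀ i : Fin (m + 1), Polynomial.eval (β i) (Polynomial.X * P)
          / ((0 - β i) * wβ i) = -(P.eval (β i) / wβ i) := by
        intro i
        rw [Polynomial.eval_mul, Polynomial.eval_X]
        have h5 : β i ≠ 0 := (hβpos i).ne'
        have h7 := hwβne i
        field_simp
        ring
      have e2 : ∀ j : Fin (n + 1), Polynomial.eval (-γ j) (Polynomial.X * P)
          / ((0 + γ j) * wγ j) = -(P.eval (-γ j) / wγ j) := by
        intro j
        rw [Polynomial.eval_mul, Polynomial.eval_X]
        have h5 : γ j ≠ 0 := (hγpos j).ne'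
        have h7 := hwγne j
        field_simp
        rw [zero_add, mul_div_cancel_left₀ _ h5]
      rw [Finset.sum_congr rfl fun i _ => e1 i, Finset.sum_congr rfl fun j _ => e2 j,
        Finset.sum_neg_distrib, Finset.sum_neg_distrib] at key2
      linarith [key2]
    have hUb : ∀ i, U i * β i = Cc * (P.eval (β i) / wβ i) := by
      intro i
      rw [hU' i]
      have h5 : β i ≠ 0 := (hβpos i).ne'
      have h7 := hwβne i
      field_simp
    have hVb : ∀ j, V j * γ j = Cc * (P.eval (-γ j) / wγ j) := by
      intro j
      rw [hV' j]
      have h5 : γ j ≠ 0 := (hγpos j).ne'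
      have h7 := hwγne j
      field_simp
    rw [Finset.sum_congr rfl fun i _ => hUb i, Finset.sum_congr rfl fun j _ => hVb j,
      ← Finset.mul_sum, ← Finset.mul_sum, ← mul_add, hsum2, mul_zero]
  -- general lemma for parts (iii) and (iv)
  have GEN : ∀ a : ℝ, (∀ i, a ≠ β i) → (∀ j, a ≠ -γ j) → P.eval a = 0 →
      (∑ i, (U i - U i * β i / (β i - a))) - (∑ j, (V j - V j * γ j / (γ j + a))) - 1 = 0 := by
    intro a ha1 ha2 hPa
    have key := KEY P hdegP a ha1 ha2
    rw [hPa, zero_div] at key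
    have hUt : ∀ i, U i * β i / (β i - a) = -(Cc * (P.eval (β i) / ((a - β i) * wβ i))) := by
      intro i
      rw [hU' i]
      have h5 : β i ≠ 0 := (hβpos i).ne'
      have h6 : β i - a ≠ 0 := sub_ne_zero.mpr (Ne.symm (ha1 i))
      have h6' : a - β i ≠ 0 := sub_ne_zero.mpr (ha1 i)
      have h7 := hwβne i
      field_simp
      ring
    have hVt : ∀ j, V j * γ j / (γ j + a) = Cc * (P.eval (-γ j) / ((a + γ j) * wγ j)) := by
      intro j
      rw [hV' j]
      have h5 : γ j ≠ 0 := (hγpos j).ne'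
      have h6 : γ j + a ≠ 0 := by
        intro h; exact ha2 j (by linarith)
      have h6' : a + γ j ≠ 0 := by
        intro h; exact ha2 j (by linarith)
      have h7 := hwγne j
      field_simp
      ring
    have e1 : (∑ i, (U i - U i * β i / (β i - a)))
        = (∑ i, U i) + Cc * ∑ i, P.eval (β i) / ((a - β i) * wβ i) := by
      rw [Finset.sum_sub_distrib, Finset.sum_congr rfl fun i _ => hUt i,
        Finset.sum_neg_distrib, ← Finset.mul_sum]
      ring
    have e2 : (∑ j, (V j - V j * γ j / (γ j + a)))
        = (∑ j, V j) - Cc * ∑ j, P.eval (-γ j) / ((a + γ j) * wγ j) := by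
      rw [Finset.sum_sub_distrib, Finset.sum_congr rfl fun j _ => hVt j, ← Finset.mul_sum]
    rw [e1, e2]
    linear_combination parti - Cc * key
  -- part (iii)
  have partiii : ∀ k : Fin n,
      (∑ i, U i * ϑ k / (ϑ k + β i)) - (∑ j, V j * ϑ k / (ϑ k - γ j)) - 1 = 0 := by
    intro k
    have ha1 : ∀ i, -ϑ k ≠ β i := by
      intro i; have := hϑpos k; have := hβpos i; intro h; linarith
    have ha2 : ∀ j, -ϑ k ≠ -γ j := by
      intro j h; exact hϑγ k j (neg_injective h)
    have hPa : P.eval (-ϑ k) = 0 := by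
      rw [hPeval]
      apply mul_eq_zero_of_right
      exact Finset.prod_eq_zero (Finset.mem_univ k) (by ring)
    have hG := GEN (-ϑ k) ha1 ha2 hPa
    have eU : ∀ i, U i * ϑ k / (ϑ k + β i) = U i - U i * β i / (β i - (-ϑ k)) := by
      intro i
      have h6 : ϑ k + β i ≠ 0 := by
        have := hϑpos k; have := hβpos i; intro h; linarith
      have h6' : β i + ϑ k ≠ 0 := by
        have := hϑpos k; have := hβpos i; intro h; linarith
      rw [sub_neg_eq_add]
      field_simp
      ring
    have eV : ∀ j, V j * ϑ k / (ϑ k - γ j) = V j - V j * γ j / (γ j + (-ϑ k)) := by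
      intro j
      have h6 : ϑ k - γ j ≠ 0 := sub_ne_zero.mpr (hϑγ k j)
      have h6' : γ j + -ϑ k ≠ 0 := by
        intro h; exact (hϑγ k j) (by linarith)
      have h6'' : γ j - ϑ k ≠ 0 := by
        intro h; exact (hϑγ k j) (by linarith)
      rw [show γ j + -ϑ k = γ j - ϑ k by ring]
      field_simp
      ring
    rw [Finset.sum_congr rfl fun i _ => eU i, Finset.sum_congr rfl fun j _ => eV j]
    exact hG
  -- part (iv)
  have partiv : ∀ k : Fin m,
      (∑ i, U i * η k / (η k - β i)) - (∑ j, V j * η k / (η k + γ j)) - 1 = 0 := by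
    intro k
    have ha1 : ∀ i, η k ≠ β i := hηβ k
    have ha2 : ∀ j, η k ≠ -γ j := by
      intro j; have := hηpos k; have := hγpos j; intro h; linarith
    have hPa : P.eval (η k) = 0 := by
      rw [hPeval]
      apply mul_eq_zero_of_left
      exact Finset.prod_eq_zero (Finset.mem_univ k) (by ring)
    have hG := GEN (η k) ha1 ha2 hPa
    have eU : ∀ i, U i * η k / (η k - β i) = U i - U i * β i / (β i - η k) := by
      intro i
      have h6 : η k - β i ≠ 0 := sub_ne_zero.mpr (hηβ k i)
      have h6' : β i - η k ≠ 0 := sub_ne_zero.mpr (Ne.symm (hηβ k i))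
      field_simp
      ring
    have eV : ∀ j, V j * η k / (η k + γ j) = V j - V j * γ j / (γ j + η k) := by
      intro j
      have h6 : η k + γ j ≠ 0 := by
        have := hηpos k; have := hγpos j; intro h; linarith
      have h6' : γ j + η k ≠ 0 := by
        have := hηpos k; have := hγpos j; intro h; linarith
      field_simp
      ring
    rw [Finset.sum_congr rfl fun i _ => eU i, Finset.sum_congr rfl fun j _ => eV j]
    exact hG
  exact ⟨parti, partii, partiii, partiv⟩
end

section
/- Let E_1, …, E_{m+1}, M_1, …, M_{n+1}, h_1, …, h_{m+1} be real numbers and define f(x) = ∑_{i=1}^{m+1} E_i/(x − β̃_i) − ∑_{j=1}^{n+1} M_j/(x + γ̂_j) − ∑_{i=1}^{m+1} h_i/(x − β̂_i) for x not equal to any β̃_i or β̂_i and not equal to any −γ̂_j. Suppose that (a) f(η_k) = 0 for all k = 1, …, m; (b) f(−ϑ_k) = 0 for all k = 1, …, n; (c) ∑_{i=1}^{m+1} E_i = ∑_{i=1}^{m+1} h_i + ∑_{j=1}^{n+1} M_j; and (d) ∑_{i=1}^{m+1} E_i β̃_i = ∑_{i=1}^{m+1} h_i β̂_i − ∑_{j=1}^{n+1}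 M_j γ̂_j. Then for every x in the domain of f, f(x) = [∏_{i=1}^{m}(x − η_i) · ∏_{j=1}^{n}(x + ϑ_j)] / [∏_{i=1}^{m+1}(x − β̃_i) · ∏_{j=1}^{n+1}(x + γ̂_j)] · ∑_{i=1}^{m+1} [∏_{k=1}^{m+1}(β̂_i − β̃_k) · ∏_{k=1}^{n+1}(β̂_i + γ̂_k)] / [∏_{k=1}^{m}(β̂_i − η_k) · ∏_{k=1}^{n}(β̂_i + ϑ_k)] · (−h_i)/(x − β̂_i). -/
open Polynomial Finset

private lemma prodlin_monic {ι : Type*} (s : Finset ι) (v : ι → ℝ) :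
    (∏ i ∈ s, (X - C (v i))).Monic :=
  monic_prod_of_monic _ _ fun _ _ => monic_X_sub_C _

private lemma prodlin_natDegree {ι : Type*} (s : Finset ι) (v : ι → ℝ) :
    (∏ i ∈ s, (X - C (v i))).natDegree = s.card := by
  rw [natDegree_prod_of_monic _ _ fun _ _ => monic_X_sub_C _]
  simp

private lemma prodlin_eval {ι : Type*} (s : Finset ι) (v : ι → ℝ) (x : ℝ) :
    eval x (∏ i ∈ s, (X - C (v i))) = ∏ i ∈ s, (x - v i) := by
  simp [eval_prod]

private lemma sum_div_mul_prod {ι : Type*} [DecidableEq ι] (s : Finset ι) (c v : ι → ℝ) (x : ℝ)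
    (hx : ∀ i ∈ s, x ≠ v i) :
    (∑ i ∈ s, c i / (x - v i)) * ∏ i ∈ s, (x - v i) =
      ∑ i ∈ s, c i * ∏ k ∈ s.erase i, (x - v k) := by
  rw [Finset.sum_mul]
  refine Finset.sum_congr rfl fun i hi => ?_
  have h0 : x - v i ≠ 0 := sub_ne_zero.mpr (hx i hi)
  rw [← Finset.mul_prod_erase s _ hi]
  field_simp

private lemma sum_mul_add {ι : Type*} (s : Finset ι) (c v : ι → ℝ) (A : ℝ) :
    ∑ i ∈ s, c i * (A + v i) = (∑ i ∈ s, c i) * A + ∑ i ∈ s, c i * v i := by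
  rw [Finset.sum_mul, ← Finset.sum_add_distrib]
  exact Finset.sum_congr rfl fun i _ => by ring

private lemma interlace_strictMono {p : ℕ} {v : Fin (p+1) → ℝ} {w : Fin p → ℝ}
    (hv : StrictMono v) (hint : ∀ k : Fin p, v k.castSucc < w k ∧ w k < v k.succ) :
    StrictMono w := by
  intro k l hkl
  exact ((hint k).2.trans_le (hv.monotone (Fin.succ_le_castSucc_iff.mpr hkl))).trans (hint l).1

private lemma interlace_ne {p : ℕ} {v : Fin (p+1) → ℝ} {w : Fin p → ℝ}
    (hv : StrictMono v) (hint : ∀ k : Fin p, v k.castSucc < w k ∧ w k < v k.succ) :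
    ∀ i k, v i ≠ w k := by
  intro i k hEq
  rcases le_or_gt i k.castSucc with hik | hik
  · exact absurd hEq ((hv.monotone hik).trans_lt (hint k).1).ne
  · exact absurd hEq ((hint k).2.trans_le (hv.monotone (Fin.castSucc_lt_iff_succ_le.mp hik))).ne'

/-- The rational-function determination step (C.10)–(C.13) in the proof of Corollary 3.2:
if `f(x) = ∑_i E_i/(x − β̃_i) − ∑_j M_j/(x + γ̂_j) − ∑_i h_i/(x − β̂_i)` on its domain,
`f` vanishes at all `η_k` and `−ϑ_k`, and the linear constraints (C.9) hold, then `f`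
equals the stated rational function, whose residue at `β̂_i` is `−h_i`. -/
theorem stmt_17 (m n : ℕ) (hm : 1 ≤ m) (hn : 1 ≤ n)
    (η : Fin m → ℝ) (ϑ : Fin n → ℝ)
    (βt : Fin (m + 1) → ℝ) (βh : Fin (m + 1) → ℝ) (γ : Fin (n + 1) → ℝ)
    (hβt0 : 0 < βt 0)
    (hβtint : ∀ k : Fin m, βt k.castSucc < η k ∧ η k < βt k.succ)
    (hβh0 : 0 < βh 0)
    (hβhint : ∀ k : Fin m, βh k.castSucc < η k ∧ η k < βh k.succ)
    (hγ0 : 0 < γ 0)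
    (hγint : ∀ k : Fin n, γ k.castSucc < ϑ k ∧ ϑ k < γ k.succ)
    (hβtβh : ∀ i j, βt i ≠ βh j)
    (E : Fin (m + 1) → ℝ) (M : Fin (n + 1) → ℝ) (h : Fin (m + 1) → ℝ)
    (f : ℝ → ℝ)
    (hf : ∀ x : ℝ, (∀ i, x ≠ βt i) → (∀ i, x ≠ βh i) → (∀ j, x ≠ -γ j) →
      f x = (∑ i, E i / (x - βt i)) - (∑ j, M j / (x + γ j)) - (∑ i, h i / (x - βh i)))
    (ha : ∀ k : Fin m, f (η k) = 0)
    (hb : ∀ k : Fin n, f (-ϑ k) = 0)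
    (hc : (∑ i, E i) = (∑ i, h i) + (∑ j, M j))
    (hd : (∑ i, E i * βt i) = (∑ i, h i * βh i) - (∑ j, M j * γ j)) :
    ∀ x : ℝ, (∀ i, x ≠ βt i) → (∀ i, x ≠ βh i) → (∀ j, x ≠ -γ j) →
      f x = (((∏ i, (x - η i)) * (∏ j, (x + ϑ j))) /
          ((∏ i, (x - βt i)) * (∏ j, (x + γ j)))) *
        (∑ i, (((∏ k, (βh i - βt k)) * (∏ k, (βh i + γ k))) /
            ((∏ k, (βh i - η k)) * (∏ k, (βh i + ϑ k)))) * (-h i / (x - βh i))) := by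
  classical
  have hβtm : StrictMono βt := Fin.strictMono_iff_lt_succ.mpr fun k => (hβtint k).1.trans (hβtint k).2
  have hβhm : StrictMono βh := Fin.strictMono_iff_lt_succ.mpr fun k => (hβhint k).1.trans (hβhint k).2
  have hγm : StrictMono γ := Fin.strictMono_iff_lt_succ.mpr fun k => (hγint k).1.trans (hγint k).2
  have hβtpos : ∀ i, 0 < βt i := fun i => hβt0.trans_le (hβtm.monotone (Fin.zero_le i))
  have hβhpos : ∀ i, 0 < βh i := fun i => hβh0.trans_le (hβhm.monotone (Fin.zero_le i))
  have hγpos : ∀ j, 0 < γ j := fun j => hγ0.trans_le (hγm.monotone (Fin.zero_le j))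
  have hηpos : ∀ k, 0 < η k := fun k => (hβtpos _).trans (hβtint k).1
  have hϑpos : ∀ k, 0 < ϑ k := fun k => (hγpos _).trans (hγint k).1
  have hηm : StrictMono η := interlace_strictMono hβtm hβtint
  have hϑm : StrictMono ϑ := interlace_strictMono hγm hγint
  have hβtη : ∀ i k, βt i ≠ η k := interlace_ne hβtm hβtint
  have hβhη : ∀ i k, βh i ≠ η k := interlace_ne hβhm hβhint
  have hγϑ : ∀ j k, γ j ≠ ϑ k := interlace_ne hγm hγint
  set T : ℝ[X] := ∏ i, (X - C (βt i)) with hT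
  set G : ℝ[X] := ∏ j, (X - C (-γ j)) with hG
  set H : ℝ[X] := ∏ i, (X - C (βh i)) with hH
  set P : ℝ[X] := (∏ k, (X - C (η k))) * (∏ k, (X - C (-ϑ k))) with hP
  set c : Fin (m+1) → ℝ := fun i =>
    (((∏ k, (βh i - βt k)) * (∏ k, (βh i + γ k))) /
      ((∏ k, (βh i - η k)) * (∏ k, (βh i + ϑ k)))) * (-h i) with hcdef
  set N : ℝ[X] :=
      (∑ i, C (E i) * ((∏ k ∈ univ.erase i, (X - C (βt k))) * G * H))
    - (∑ j, C (M j) * (T * (∏ k ∈ univ.erase j, (X - C (-γ k))) * H))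
    - (∑ i, C (h i) * (T * G * (∏ k ∈ univ.erase i, (X - C (βh k))))) with hN
  set N' : ℝ[X] := P * (∑ i, C (c i) * (∏ k ∈ univ.erase i, (X - C (βh k)))) with hN'
  -- evaluation bridge for N
  have hevalN : ∀ x : ℝ, (∀ i, x ≠ βt i) → (∀ i, x ≠ βh i) → (∀ j, x ≠ -γ j) →
      eval x N = f x * ((∏ i, (x - βt i)) * (∏ j, (x + γ j)) * (∏ i, (x - βh i))) := by
    intro x hx1 hx2 hx3
    have eT : (∑ i, E i / (x - βt i)) * ∏ i, (x - βt i)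
        = ∑ i, E i * ∏ k ∈ univ.erase i, (x - βt k) :=
      sum_div_mul_prod _ _ _ _ fun i _ => hx1 i
    have eG : (∑ j, M j / (x + γ j)) * ∏ j, (x + γ j)
        = ∑ j, M j * ∏ k ∈ univ.erase j, (x + γ k) := by
      have := sum_div_mul_prod (univ : Finset (Fin (n+1))) M (fun j => -γ j) x fun j _ => hx3 j
      simpa [sub_neg_eq_add] using this
    have eH : (∑ i, h i / (x - βh i)) * ∏ i, (x - βh i)
        = ∑ i, h i * ∏ k ∈ univ.erase i, (x - βh k) :=
      sum_div_mul_prod _ _ _ _ fun i _ => hx2 i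
    have evN : eval x N =
        (∑ i, E i * ((∏ k ∈ univ.erase i, (x - βt k)) * (∏ j, (x + γ j)) * (∏ i', (x - βh i'))))
      - (∑ j, M j * ((∏ i', (x - βt i')) * (∏ k ∈ univ.erase j, (x + γ k)) * (∏ i', (x - βh i'))))
      - (∑ i, h i * ((∏ i', (x - βt i')) * (∏ j, (x + γ j)) * (∏ k ∈ univ.erase i, (x - βh k)))) := by
      simp only [hN, hT, hG, hH, eval_sub, eval_finset_sum, eval_mul, eval_C, prodlin_eval,
        sub_neg_eq_add]
    have p1 : (∑ i, E i / (x - βt i)) * ((∏ i, (x - βt i)) * (∏ j, (x + γ j)) * (∏ i, (x - βh i)))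
        = ∑ i, E i * ((∏ k ∈ univ.erase i, (x - βt k)) * (∏ j, (x + γ j)) * (∏ i', (x - βh i'))) := by
      calc (∑ i, E i / (x - βt i)) * ((∏ i, (x - βt i)) * (∏ j, (x + γ j)) * (∏ i, (x - βh i)))
          = ((∑ i, E i / (x - βt i)) * ∏ i, (x - βt i)) * ((∏ j, (x + γ j)) * (∏ i, (x - βh i))) := by
            ring
        _ = (∑ i, E i * ∏ k ∈ univ.erase i, (x - βt k)) * ((∏ j, (x + γ j)) * (∏ i, (x - βh i))) := by
            rw [eT]
        _ = _ := by rw [Finset.sum_mul]; exact Finset.sum_congr rfl fun i _ => by ring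
    have p2 : (∑ j, M j / (x + γ j)) * ((∏ i, (x - βt i)) * (∏ j, (x + γ j)) * (∏ i, (x - βh i)))
        = ∑ j, M j * ((∏ i', (x - βt i')) * (∏ k ∈ univ.erase j, (x + γ k)) * (∏ i', (x - βh i'))) := by
      calc (∑ j, M j / (x + γ j)) * ((∏ i, (x - βt i)) * (∏ j, (x + γ j)) * (∏ i, (x - βh i)))
          = ((∑ j, M j / (x + γ j)) * ∏ j, (x + γ j)) * ((∏ i, (x - βt i)) * (∏ i, (x - βh i))) := by
            ring
        _ = (∑ j, M j * ∏ k ∈ univ.erase j, (x + γ k)) * ((∏ i, (x - βt i)) * (∏ i, (x - βh i))) := by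
            rw [eG]
        _ = _ := by rw [Finset.sum_mul]; exact Finset.sum_congr rfl fun j _ => by ring
    have p3 : (∑ i, h i / (x - βh i)) * ((∏ i, (x - βt i)) * (∏ j, (x + γ j)) * (∏ i, (x - βh i)))
        = ∑ i, h i * ((∏ i', (x - βt i')) * (∏ j, (x + γ j)) * (∏ k ∈ univ.erase i, (x - βh k))) := by
      calc (∑ i, h i / (x - βh i)) * ((∏ i, (x - βt i)) * (∏ j, (x + γ j)) * (∏ i, (x - βh i)))
          = ((∑ i, h i / (x - βh i)) * ∏ i, (x - βh i)) * ((∏ i, (x - βt i)) * (∏ j, (x + γ j))) := by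
            ring
        _ = (∑ i, h i * ∏ k ∈ univ.erase i, (x - βh k)) * ((∏ i, (x - βt i)) * (∏ j, (x + γ j))) := by
            rw [eH]
        _ = _ := by rw [Finset.sum_mul]; exact Finset.sum_congr rfl fun i _ => by ring
    rw [hf x hx1 hx2 hx3, evN, sub_mul, sub_mul, p1, p2, p3]
  have hevalN' : ∀ x : ℝ, (∀ i, x ≠ βt i) → (∀ i, x ≠ βh i) → (∀ j, x ≠ -γ j) →
      eval x N' = ((((∏ i, (x - η i)) * (∏ j, (x + ϑ j))) /
          ((∏ i, (x - βt i)) * (∏ j, (x + γ j)))) * (∑ i, c i / (x - βh i)))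
        * ((∏ i, (x - βt i)) * (∏ j, (x + γ j)) * (∏ i, (x - βh i))) := by
    intro x hx1 hx2 hx3
    have q : (∑ i, c i / (x - βh i)) * ∏ i, (x - βh i)
        = ∑ i, c i * ∏ k ∈ univ.erase i, (x - βh k) :=
      sum_div_mul_prod _ _ _ _ fun i _ => hx2 i
    have hTGne : (∏ i, (x - βt i)) * (∏ j, (x + γ j)) ≠ 0 := by
      refine mul_ne_zero ?_ ?_ <;> refine Finset.prod_ne_zero_iff.mpr fun i _ => ?_
      · exact sub_ne_zero.mpr (hx1 i)
      · intro h0; exact hx3 i (by linarith)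
    have evN' : eval x N' = ((∏ k, (x - η k)) * (∏ k, (x + ϑ k)))
        * ∑ i, c i * ∏ k ∈ univ.erase i, (x - βh k) := by
      simp only [hN', hP, eval_mul, eval_finset_sum, eval_C, prodlin_eval, sub_neg_eq_add]
    rw [evN', ← q]
    have hcan := div_mul_cancel₀ ((∏ i, (x - η i)) * (∏ j, (x + ϑ j))) hTGne
    linear_combination (-(∑ i, c i / (x - βh i)) * ∏ i, (x - βh i)) * hcan
  have hkey : N = N' := by
    have hGmonic : G.Monic := prodlin_monic _ _
    have hHmonic : H.Monic := prodlin_monic _ _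
    have hTmonic : T.Monic := prodlin_monic _ _
    have hGd : G.natDegree = n + 1 := by rw [hG, prodlin_natDegree]; simp
    have hHd : H.natDegree = m + 1 := by rw [hH, prodlin_natDegree]; simp
    have hTd : T.natDegree = m + 1 := by rw [hT, prodlin_natDegree]; simp
    have hcard1 : ∀ i : Fin (m+1), ((univ : Finset (Fin (m+1))).erase i).card = m := fun i => by
      rw [Finset.card_erase_of_mem (mem_univ _)]; simp
    have hcard2 : ∀ j : Fin (n+1), ((univ : Finset (Fin (n+1))).erase j).card = n := fun j => by
      rw [Finset.card_erase_of_mem (mem_univ _)]; simp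
    have h1m : ∀ i : Fin (m+1), ((∏ k ∈ univ.erase i, (X - C (βt k))) * G * H).Monic :=
      fun i => ((prodlin_monic _ _).mul hGmonic).mul hHmonic
    have h2m : ∀ j : Fin (n+1), (T * (∏ k ∈ univ.erase j, (X - C (-γ k))) * H).Monic :=
      fun j => (hTmonic.mul (prodlin_monic _ _)).mul hHmonic
    have h3m : ∀ i : Fin (m+1), (T * G * (∏ k ∈ univ.erase i, (X - C (βh k)))).Monic :=
      fun i => (hTmonic.mul hGmonic).mul (prodlin_monic _ _)
    have h1d : ∀ i : Fin (m+1),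
        ((∏ k ∈ univ.erase i, (X - C (βt k))) * G * H).natDegree = 2*m+n+2 := fun i => by
      rw [Monic.natDegree_mul ((prodlin_monic _ _).mul hGmonic) hHmonic,
        Monic.natDegree_mul (prodlin_monic _ _) hGmonic, prodlin_natDegree (univ.erase i) βt, hcard1, hGd, hHd]
      omega
    have h2d : ∀ j : Fin (n+1),
        (T * (∏ k ∈ univ.erase j, (X - C (-γ k))) * H).natDegree = 2*m+n+2 := fun j => by
      rw [Monic.natDegree_mul (hTmonic.mul (prodlin_monic _ _)) hHmonic,
        Monic.natDegree_mul hTmonic (prodlin_monic _ _), prodlin_natDegree (univ.erase j) (fun k => -γ k), hcard2, hTd, hHd]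
      omega
    have h3d : ∀ i : Fin (m+1),
        (T * G * (∏ k ∈ univ.erase i, (X - C (βh k)))).natDegree = 2*m+n+2 := fun i => by
      rw [Monic.natDegree_mul (hTmonic.mul hGmonic) (prodlin_monic _ _),
        Monic.natDegree_mul hTmonic hGmonic, prodlin_natDegree (univ.erase i) βh, hcard1, hTd, hGd]
      omega
    have hGnext : G.nextCoeff = ∑ j, γ j := by
      rw [hG, prod_X_sub_C_nextCoeff]; simp
    have hHnext : H.nextCoeff = -∑ k, βh k := by
      rw [hH, prod_X_sub_C_nextCoeff]
    have hTnext : T.nextCoeff = -∑ k, βt k := by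
      rw [hT, prod_X_sub_C_nextCoeff]
    -- coefficients of N vanish above degree 2m+n
    have hcoeffN : ∀ d, 2*m+n < d → N.coeff d = 0 := by
      intro d hdg
      rcases lt_trichotomy d (2*m+n+2) with hlt | heq | hgt
      · have hd1 : d = 2*m+n+1 := by omega
        subst hd1
        have c1 : ∀ i : Fin (m+1),
            ((∏ k ∈ univ.erase i, (X - C (βt k))) * G * H).coeff (2*m+n+1)
              = ((∑ j, γ j) - (∑ k, βt k) - (∑ k, βh k)) + βt i := fun i => by
          have hpos : 0 < ((∏ k ∈ univ.erase i, (X - C (βt k))) * G * H).natDegree := by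
            rw [h1d]; omega
          have hnc := nextCoeff_of_natDegree_pos hpos
          rw [h1d] at hnc
          have h21 : 2*m+n+2-1 = 2*m+n+1 := by omega
          rw [h21] at hnc
          rw [← hnc, Monic.nextCoeff_mul ((prodlin_monic _ _).mul hGmonic) hHmonic,
            Monic.nextCoeff_mul (prodlin_monic _ _) hGmonic,
            prod_X_sub_C_nextCoeff (s := univ.erase i) βt,
            hGnext, hHnext, Finset.sum_erase_eq_sub (mem_univ i)]
          ring
        have c2 : ∀ j : Fin (n+1),
            (T * (∏ k ∈ univ.erase j, (X - C (-γ k))) * H).coeff (2*m+n+1)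
              = ((∑ j, γ j) - (∑ k, βt k) - (∑ k, βh k)) + -γ j := fun j => by
          have hpos : 0 < (T * (∏ k ∈ univ.erase j, (X - C (-γ k))) * H).natDegree := by
            rw [h2d]; omega
          have hnc := nextCoeff_of_natDegree_pos hpos
          rw [h2d] at hnc
          have h21 : 2*m+n+2-1 = 2*m+n+1 := by omega
          rw [h21] at hnc
          rw [← hnc, Monic.nextCoeff_mul (hTmonic.mul (prodlin_monic _ _)) hHmonic,
            Monic.nextCoeff_mul hTmonic (prodlin_monic _ _),
            prod_X_sub_C_nextCoeff (s := univ.erase j) (fun k => -γ k),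
            hTnext, hHnext, Finset.sum_erase_eq_sub (mem_univ j)]
          simp only [Finset.sum_neg_distrib]
          ring
        have c3 : ∀ i : Fin (m+1),
            (T * G * (∏ k ∈ univ.erase i, (X - C (βh k)))).coeff (2*m+n+1)
              = ((∑ j, γ j) - (∑ k, βt k) - (∑ k, βh k)) + βh i := fun i => by
          have hpos : 0 < (T * G * (∏ k ∈ univ.erase i, (X - C (βh k)))).natDegree := by
            rw [h3d]; omega
          have hnc := nextCoeff_of_natDegree_pos hpos
          rw [h3d] at hnc
          have h21 : 2*m+n+2-1 = 2*m+n+1 := by omega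
          rw [h21] at hnc
          rw [← hnc, Monic.nextCoeff_mul (hTmonic.mul hGmonic) (prodlin_monic _ _),
            Monic.nextCoeff_mul hTmonic hGmonic,
            prod_X_sub_C_nextCoeff (s := univ.erase i) βh,
            hTnext, hGnext, Finset.sum_erase_eq_sub (mem_univ i)]
          ring
        rw [hN]
        simp only [coeff_sub, finset_sum_coeff, coeff_C_mul, c1, c2, c3]
        rw [sum_mul_add, sum_mul_add, sum_mul_add]
        have e2' : ∑ j : Fin (n+1), M j * -γ j = -∑ j, M j * γ j := by
          simp [mul_neg]
        rw [e2']
        linear_combination ((∑ j, γ j) - (∑ k, βt k) - (∑ k, βh k)) * hc + hd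
      · subst heq
        have c1 : ∀ i : Fin (m+1),
            ((∏ k ∈ univ.erase i, (X - C (βt k))) * G * H).coeff (2*m+n+2) = 1 := fun i => by
          have := (h1m i).coeff_natDegree; rwa [h1d i] at this
        have c2 : ∀ j : Fin (n+1),
            (T * (∏ k ∈ univ.erase j, (X - C (-γ k))) * H).coeff (2*m+n+2) = 1 := fun j => by
          have := (h2m j).coeff_natDegree; rwa [h2d j] at this
        have c3 : ∀ i : Fin (m+1),
            (T * G * (∏ k ∈ univ.erase i, (X - C (βh k)))).coeff (2*m+n+2) = 1 := fun i => by
          have := (h3m i).coeff_natDegree; rwa [h3d i] at this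
        rw [hN]
        simp only [coeff_sub, finset_sum_coeff, coeff_C_mul, c1, c2, c3, mul_one]
        linarith [hc]
      · rw [hN]
        simp only [coeff_sub, finset_sum_coeff, coeff_C_mul]
        rw [Finset.sum_eq_zero fun i _ => by
              rw [coeff_eq_zero_of_natDegree_lt (by rw [h1d]; omega), mul_zero],
            Finset.sum_eq_zero fun j _ => by
              rw [coeff_eq_zero_of_natDegree_lt (by rw [h2d]; omega), mul_zero],
            Finset.sum_eq_zero fun i _ => by
              rw [coeff_eq_zero_of_natDegree_lt (by rw [h3d]; omega), mul_zero]]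
        ring
    have hN'deg : N'.natDegree ≤ 2*m+n := by
      rw [hN']
      refine le_trans natDegree_mul_le ?_
      have hPd : P.natDegree ≤ m + n := by
        rw [hP]
        refine le_trans natDegree_mul_le ?_
        rw [prodlin_natDegree, prodlin_natDegree]; simp
      have hSd : (∑ i, C (c i) * (∏ k ∈ univ.erase i, (X - C (βh k)))).natDegree ≤ m := by
        refine natDegree_sum_le_of_forall_le _ _ fun i _ => ?_
        refine le_trans natDegree_mul_le ?_
        rw [natDegree_C, prodlin_natDegree, hcard1]; omega
      calc P.natDegree + (∑ i, C (c i) * (∏ k ∈ univ.erase i, (X - C (βh k)))).natDegree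
          ≤ (m + n) + m := add_le_add hPd hSd
        _ = 2*m+n := by omega
    have hdiff : (N - N').natDegree ≤ 2*m+n :=
      natDegree_le_iff_coeff_eq_zero.mpr fun d hd => by
        rw [coeff_sub, hcoeffN d hd,
          coeff_eq_zero_of_natDegree_lt (lt_of_le_of_lt hN'deg hd), sub_zero]
    -- roots
    have hrootη : ∀ k : Fin m, eval (η k) (N - N') = 0 := by
      intro k
      have hd1 : ∀ i, η k ≠ βt i := fun i => (hβtη i k).symm
      have hd2 : ∀ i, η k ≠ βh i := fun i => (hβhη i k).symm
      have hd3 : ∀ j, η k ≠ -γ j := by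
        intro j hEq; have := hγpos j; have := hηpos k; linarith
      rw [eval_sub, hevalN _ hd1 hd2 hd3, ha k, zero_mul, hN', eval_mul, hP, eval_mul,
        prodlin_eval, prodlin_eval]
      have hz : ∏ i, (η k - η i) = 0 := Finset.prod_eq_zero (mem_univ k) (by ring)
      rw [hz]; ring
    have hrootϑ : ∀ k : Fin n, eval (-ϑ k) (N - N') = 0 := by
      intro k
      have hd1 : ∀ i, -ϑ k ≠ βt i := by
        intro i hEq; have := hβtpos i; have := hϑpos k; linarith
      have hd2 : ∀ i, -ϑ k ≠ βh i := by
        intro i hEq; have := hβhpos i; have := hϑpos k; linarith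
      have hd3 : ∀ j, -ϑ k ≠ -γ j := by
        intro j hEq
        exact (hγϑ j k) (neg_injective hEq).symm
      rw [eval_sub, hevalN _ hd1 hd2 hd3, hb k, zero_mul, hN', eval_mul, hP, eval_mul,
        prodlin_eval, prodlin_eval]
      have hz : ∏ i, (-ϑ k - -ϑ i) = 0 := Finset.prod_eq_zero (mem_univ k) (by ring)
      rw [hz]; ring
    have hrootβh : ∀ i : Fin (m+1), eval (βh i) (N - N') = 0 := by
      intro i
      have hEz : ∀ i' : Fin (m+1), i' ≠ i →
          eval (βh i) (∏ k ∈ univ.erase i', (X - C (βh k))) = 0 := by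
        intro i' hne'
        rw [prodlin_eval]
        exact Finset.prod_eq_zero (Finset.mem_erase.mpr ⟨Ne.symm hne', mem_univ _⟩) (by ring)
      have hHz : eval (βh i) H = 0 := by
        rw [hH, prodlin_eval]; exact Finset.prod_eq_zero (mem_univ i) (by ring)
      rw [eval_sub, sub_eq_zero, hN, hN']
      simp only [eval_sub, eval_finset_sum, eval_mul, eval_C]
      rw [hHz]
      simp only [mul_zero, Finset.sum_const_zero, zero_sub, sub_zero]
      rw [Finset.sum_eq_single i (fun i' _ hne' => by rw [hEz i' hne']; ring)
            (fun hmem => absurd (mem_univ i) hmem),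
          Finset.sum_eq_single i (fun i' _ hne' => by rw [hEz i' hne']; ring)
            (fun hmem => absurd (mem_univ i) hmem)]
      rw [hT, hG, hP, eval_mul]
      simp only [prodlin_eval, sub_neg_eq_add]
      have hP1 : (∏ k, (βh i - η k)) ≠ 0 :=
        Finset.prod_ne_zero_iff.mpr fun k _ => sub_ne_zero.mpr (hβhη i k)
      have hP2 : (∏ k, (βh i + ϑ k)) ≠ 0 :=
        Finset.prod_ne_zero_iff.mpr fun k _ => ne_of_gt (add_pos (hβhpos i) (hϑpos k))
      simp only [hcdef, sub_neg_eq_add]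
      field_simp
    have hzero : N - N' = 0 := by
      have hcardval : Fintype.card (Fin m ⊕ Fin n ⊕ Fin (m+1)) = m + (n + (m+1)) := by simp
      refine eq_zero_of_natDegree_lt_card_of_eval_eq_zero (N - N')
        (f := Sum.elim η (Sum.elim (fun j => -ϑ j) βh)) ?_ ?_ ?_
      · rintro (a|b|c₁) (a'|b'|c₂) hEq <;>
          simp only [Sum.elim_inl, Sum.elim_inr] at hEq
        · exact congrArg _ (hηm.injective hEq)
        · exfalso; have := hηpos a; have := hϑpos b'; linarith
        · exact absurd hEq ((hβhη c₂ a).symm)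
        · exfalso; have := hηpos a'; have := hϑpos b; linarith
        · exact congrArg _ (congrArg _ (hϑm.injective (neg_injective hEq)))
        · exfalso; have := hβhpos c₂; have := hϑpos b; linarith
        · exact absurd hEq.symm ((hβhη c₁ a').symm)
        · exfalso; have := hβhpos c₁; have := hϑpos b'; linarith
        · exact congrArg _ (congrArg _ (hβhm.injective hEq))
      · rintro (a|b|c₁)
        · exact hrootη a
        · exact hrootϑ b
        · exact hrootβh c₁
      · rw [hcardval]
        exact lt_of_le_of_lt hdiff (by omega)
    exact sub_eq_zero.mp hzero
  intro x hx1 hx2 hx3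
  have hne : (∏ i, (x - βt i)) * (∏ j, (x + γ j)) * (∏ i, (x - βh i)) ≠ 0 := by
    refine mul_ne_zero (mul_ne_zero ?_ ?_) ?_ <;>
      refine Finset.prod_ne_zero_iff.mpr fun i _ => ?_
    · exact sub_ne_zero.mpr (hx1 i)
    · intro h0
      exact hx3 i (by linarith)
    · exact sub_ne_zero.mpr (hx2 i)
  have e1 := hevalN x hx1 hx2 hx3
  have e2 := hevalN' x hx1 hx2 hx3
  rw [hkey, e2] at e1
  have := mul_right_cancel₀ hne e1
  rw [← this]
  congr 1
  refine Finset.sum_congr rfl fun i _ => ?_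
  simp only [hcdef]
  rw [mul_div_assoc]
end
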